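/- arXiv:1301.5034 — 5 statements merged into one kernel-verified Lean document; each statement's English description precedes it below -/
import Mathlib

section
/- Let k and m be positive integers, and let X ~ Gamma(k,1) and Y ~ Gamma(m,1) be independent random variables. Then for every z ≥ 0, P(X/Y ≤ z) = 1 - Σ_{i=0}^{k-1} [ (m+i-1)! / ((m-1)! · i!) ] · z^i / (1+z)^{m+i}. -/
open MeasureTheory ProbabilityTheory Real Set
open scoped ENNReal NNReal

lemma sum_deriv_aux (k : ℕ) (hk : 0 < k) (x : ℝ) :
    HasDerivAt (fun x : ℝ => -(Real.exp (-x) * ∑ i ∈ Finset.range k, x ^ i / (Nat.factorial i)))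
      (Real.exp (-x) * x ^ (k-1) / (Nat.factorial (k-1))) x := by
  obtain ⟨n, rfl⟩ : ∃ n, k = n + 1 := ⟨k - 1, (Nat.succ_pred_eq_of_pos hk).symm⟩
  have hS : HasDerivAt (fun x : ℝ => ∑ i ∈ Finset.range (n+1), x ^ i / (Nat.factorial i))
      (∑ i ∈ Finset.range n, x ^ i / (Nat.factorial i)) x := by
    have h1 : HasDerivAt (fun x : ℝ => ∑ i ∈ Finset.range (n+1), x ^ i / (Nat.factorial i))
        (∑ i ∈ Finset.range (n+1), (i : ℝ) * x ^ (i-1) / (Nat.factorial i)) x := by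
      apply HasDerivAt.fun_sum
      intro i _
      simpa [div_eq_mul_inv] using (hasDerivAt_pow i x).mul_const ((Nat.factorial i : ℝ)⁻¹)
    convert h1 using 1
    rw [Finset.sum_range_succ']
    simp only [Nat.cast_zero, zero_mul, zero_div, add_zero, Nat.add_sub_cancel]
    refine Finset.sum_congr rfl fun i _ => ?_
    rw [Nat.factorial_succ, Nat.cast_mul]
    have h2 : ((i:ℝ)+1) ≠ 0 := by positivity
    field_simp
  have hE : HasDerivAt (fun x : ℝ => Real.exp (-x)) (-Real.exp (-x)) x := by
    simpa using (hasDerivAt_neg x).exp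
  have := (hE.mul hS).neg
  refine this.congr_deriv ?_
  rw [Finset.sum_range_succ, Nat.add_sub_cancel]
  ring

lemma gamma_cdf_closed (k : ℕ) (hk : 0 < k) {t : ℝ} (ht : 0 ≤ t) :
    gammaMeasure k 1 (Iic t) =
      ENNReal.ofReal (1 - Real.exp (-t) * ∑ i ∈ Finset.range k, t ^ i / (Nat.factorial i)) := by
  have hcast : ((k:ℝ) - 1) = ((k - 1 : ℕ) : ℝ) := by
    rw [Nat.cast_sub hk]; simp
  have hpdf : ∀ x ∈ Icc 0 t, gammaPDF (k:ℝ) 1 x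
      = ENNReal.ofReal (Real.exp (-x) * x ^ (k-1) / (Nat.factorial (k-1))) := by
    intro x hx
    rw [gammaPDF_of_nonneg hx.1, Real.one_rpow, hcast, Real.rpow_natCast]
    congr 1
    have : Real.Gamma (k:ℝ) = Nat.factorial (k-1) := by
      rw [show (k:ℝ) = ((k-1:ℕ):ℝ) + 1 by rw [← hcast]; ring, Real.Gamma_nat_eq_factorial]
    rw [this]
    ring_nf
  rw [gammaMeasure, withDensity_apply _ measurableSet_Iic,
    lintegral_Iic_eq_lintegral_Iio_add_Icc _ ht, lintegral_gammaPDF_of_nonpos le_rfl, zero_add,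
    setLIntegral_congr_fun measurableSet_Icc hpdf]
  have hcont : Continuous (fun x : ℝ => Real.exp (-x) * x ^ (k-1) / (Nat.factorial (k-1))) := by
    continuity
  rw [← ofReal_integral_eq_lintegral_ofReal (hcont.integrableOn_Icc)
    ((ae_restrict_iff' measurableSet_Icc).2 (ae_of_all _ fun x hx => by have := hx.1; positivity))]
  congr 1
  rw [integral_Icc_eq_integral_Ioc, ← intervalIntegral.integral_of_le ht,
    intervalIntegral.integral_eq_sub_of_hasDerivAt (fun x _ => sum_deriv_aux k hk x)
      (hcont.intervalIntegrable 0 t)]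
  have hS0 : ∑ i ∈ Finset.range k, (0:ℝ) ^ i / (Nat.factorial i) = 1 := by
    rw [Finset.sum_eq_single 0]
    · simp
    · intro i _ hi; simp [zero_pow hi]
    · intro h; exact absurd (Finset.mem_range.2 hk) h
  rw [hS0]
  rw [neg_zero, Real.exp_zero]; ring

lemma term_lintegral (m i : ℕ) (hm : 0 < m) {z : ℝ} (hz : 0 ≤ z) :
    ∫⁻ y, ENNReal.ofReal (Real.exp (-(z*y)) * (z*y) ^ i / (Nat.factorial i))
        ∂(gammaMeasure m 1)
      = ENNReal.ofReal ((Nat.factorial (m + i - 1) : ℝ) /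
            ((Nat.factorial (m - 1) : ℝ) * (Nat.factorial i : ℝ)) *
          z ^ i / (1 + z) ^ (m + i)) := by
  have hz1 : (0:ℝ) < 1 + z := by linarith
  have hf : Measurable fun y : ℝ => ENNReal.ofReal (Real.exp (-(z*y)) * (z*y) ^ i / (Nat.factorial i)) := by
    apply Measurable.ennreal_ofReal
    fun_prop
  set C : ℝ := (Nat.factorial (m + i - 1) : ℝ) /
            ((Nat.factorial (m - 1) : ℝ) * (Nat.factorial i : ℝ)) *
          z ^ i / (1 + z) ^ (m + i) with hC
  have hg : Measurable (gammaPDF (m:ℝ) 1) := (measurable_gammaPDFReal _ _).ennreal_ofReal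
  rw [gammaMeasure, lintegral_withDensity_eq_lintegral_mul _ hg hf]
  have hae : ∀ᵐ y ∂(volume : Measure ℝ),
      (gammaPDF (m:ℝ) 1 * fun y => ENNReal.ofReal (Real.exp (-(z*y)) * (z*y) ^ i / (Nat.factorial i))) y
        = ENNReal.ofReal C * gammaPDF ((m+i : ℕ):ℝ) (1+z) y := by
    filter_upwards [compl_mem_ae_iff.2 (volume_singleton (a := (0:ℝ)))] with y hy0
    have hy0' : y ≠ 0 := fun h => hy0 (by simp [h])
    rcases lt_or_gt_of_ne hy0' with hy | hy
    · simp [gammaPDF_of_neg hy, gammaPDF_of_neg hy]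
    · have hy' : (0:ℝ) ≤ y := hy.le
      simp only [Pi.mul_apply, gammaPDF_of_nonneg hy']
      rw [← ENNReal.ofReal_mul (by positivity), ← ENNReal.ofReal_mul (by positivity)]
      congr 1
      have hGm : Real.Gamma (m:ℝ) = Nat.factorial (m-1) := by
        rw [show (m:ℝ) = ((m-1:ℕ):ℝ) + 1 by rw [Nat.cast_sub hm]; push_cast; ring,
          Real.Gamma_nat_eq_factorial]
      have hGmi : Real.Gamma ((m+i:ℕ):ℝ) = Nat.factorial (m+i-1) := by
        rw [show ((m+i:ℕ):ℝ) = ((m+i-1:ℕ):ℝ) + 1 by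
          rw [Nat.cast_sub (le_trans hm (Nat.le_add_right m i))]; push_cast; ring,
          Real.Gamma_nat_eq_factorial]
      have hym : y ^ ((m:ℝ) - 1) = y ^ (m - 1 : ℕ) := by
        rw [show (m:ℝ) - 1 = ((m-1:ℕ):ℝ) by rw [Nat.cast_sub hm]; push_cast; ring,
          Real.rpow_natCast]
      have hymi : y ^ (((m+i:ℕ):ℝ) - 1) = y ^ (m + i - 1 : ℕ) := by
        rw [show ((m+i:ℕ):ℝ) - 1 = ((m+i-1:ℕ):ℝ) by
          rw [Nat.cast_sub (le_trans hm (Nat.le_add_right m i))]; push_cast; ring,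
          Real.rpow_natCast]
      have hpow : (1+z) ^ (((m+i:ℕ)):ℝ) = (1+z) ^ (m+i : ℕ) := Real.rpow_natCast _ _
      have h1m : (1:ℝ) ^ ((m:ℕ):ℝ) = 1 := Real.one_rpow _
      rw [hym, hymi, hpow, h1m, hGm, hGmi]
      have hysplit : y ^ (m + i - 1 : ℕ) = y ^ (m - 1 : ℕ) * y ^ i := by
        rw [← pow_add]
        congr 1
        omega
      rw [hysplit, hC, mul_pow,
        show -((1+z)*y) = -(1*y) + -(z*y) by ring, Real.exp_add]
      have hfac : (0:ℝ) < (Nat.factorial (m-1) : ℝ) := by positivity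
      have hfaci : (0:ℝ) < (Nat.factorial i : ℝ) := by positivity
      have hfacmi : (0:ℝ) < (Nat.factorial (m+i-1) : ℝ) := by positivity
      field_simp
  have hg2 : Measurable (gammaPDF ((m+i:ℕ):ℝ) (1+z)) := (measurable_gammaPDFReal _ _).ennreal_ofReal
  rw [lintegral_congr_ae hae, lintegral_const_mul _ hg2,
    lintegral_gammaPDF_eq_one (Nat.cast_pos.2 (by omega)) hz1, mul_one]

lemma gamma_Iic_zero (a r : ℝ) : gammaMeasure a r (Iic 0) = 0 := by
  rw [gammaMeasure, withDensity_apply _ measurableSet_Iic,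
    setLIntegral_congr (Iio_ae_eq_Iic (a := (0:ℝ))).symm, lintegral_gammaPDF_of_nonpos le_rfl]


/-- CDF of the ratio of two independent Gamma random variables with integer shapes and rate 1. -/
theorem gamma_ratio_cdf
    {Ω : Type*} [MeasurableSpace Ω] (μ : Measure Ω) [IsProbabilityMeasure μ]
    (k m : ℕ) (hk : 0 < k) (hm : 0 < m) (X Y : Ω → ℝ)
    (hX : Measurable X) (hY : Measurable Y)
    (hindep : IndepFun X Y μ)
    (hXd : Measure.map X μ = gammaMeasure k 1)
    (hYd : Measure.map Y μ = gammaMeasure m 1) :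
    ∀ z : ℝ, 0 ≤ z →
      (μ {ω | X ω / Y ω ≤ z}).toReal =
        1 - ∑ i ∈ Finset.range k,
          ((Nat.factorial (m + i - 1) : ℝ) /
            ((Nat.factorial (m - 1) : ℝ) * (Nat.factorial i : ℝ))) *
          z ^ i / (1 + z) ^ (m + i) := by
  intro z hz
  have hk' : (0:ℝ) < k := Nat.cast_pos.2 hk
  have hm' : (0:ℝ) < m := Nat.cast_pos.2 hm
  have hgk : IsProbabilityMeasure (gammaMeasure (k:ℝ) 1) := isProbabilityMeasure_gammaMeasure hk' one_pos
  have hgm : IsProbabilityMeasure (gammaMeasure (m:ℝ) 1) := isProbabilityMeasure_gammaMeasure hm' one_pos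
  -- a.e. positivity of Y
  have hY0 : ∀ᵐ ω ∂μ, 0 < Y ω := by
    rw [ae_iff]
    have h1 : {ω | ¬ 0 < Y ω} = Y ⁻¹' (Iic 0) := by ext ω; simp [not_lt]
    rw [h1, ← Measure.map_apply hY measurableSet_Iic, hYd, gamma_Iic_zero]
  have hseteq : {ω | X ω / Y ω ≤ z} =ᵐ[μ] {ω | X ω ≤ z * Y ω} := by
    filter_upwards [hY0] with ω hω
    simp only [Set.mem_setOf_eq, eq_iff_iff]
    exact div_le_iff₀ hω
  rw [measure_congr hseteq]
  have hs : MeasurableSet {p : ℝ × ℝ | p.1 ≤ z * p.2} :=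
    measurableSet_le measurable_fst (measurable_snd.const_mul z)
  have hmapped : μ {ω | X ω ≤ z * Y ω}
      = ((gammaMeasure (k:ℝ) 1).prod (gammaMeasure (m:ℝ) 1)) {p : ℝ × ℝ | p.1 ≤ z * p.2} := by
    rw [← hXd, ← hYd,
      ← (indepFun_iff_map_prod_eq_prod_map_map hX.aemeasurable hY.aemeasurable).1 hindep,
      Measure.map_apply (hX.prodMk hY) hs]
    rfl
  rw [hmapped, Measure.prod_apply_symm hs]
  -- the integrand of the outer integral
  set h : ℝ → ℝ≥0∞ := fun y =>
    ∑ i ∈ Finset.range k, ENNReal.ofReal (Real.exp (-(z*y)) * (z*y) ^ i / (Nat.factorial i))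
    with hh
  have hym : ∀ᵐ y ∂(gammaMeasure (m:ℝ) 1), 0 < y := by
    rw [ae_iff]
    have h1 : {y : ℝ | ¬ 0 < y} = Iic 0 := by ext y; simp [not_lt]
    rw [h1, gamma_Iic_zero]
  have hS_nonneg : ∀ y : ℝ, 0 < y →
      ∀ i ∈ Finset.range k, 0 ≤ Real.exp (-(z*y)) * (z*y) ^ i / (Nat.factorial i) := by
    intro y hy i _
    have : 0 ≤ z * y := mul_nonneg hz hy.le
    positivity
  have hS_le_one : ∀ y : ℝ, 0 < y →
      Real.exp (-(z*y)) * ∑ i ∈ Finset.range k, (z*y) ^ i / (Nat.factorial i) ≤ 1 := by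
    intro y hy
    have ht : 0 ≤ z * y := mul_nonneg hz hy.le
    have := Real.sum_le_exp_of_nonneg ht k
    calc Real.exp (-(z*y)) * ∑ i ∈ Finset.range k, (z*y) ^ i / (Nat.factorial i)
        ≤ Real.exp (-(z*y)) * Real.exp (z*y) := by
          exact mul_le_mul_of_nonneg_left this (Real.exp_nonneg _)
      _ = 1 := by rw [← Real.exp_add]; simp
  have hinner : ∀ᵐ y ∂(gammaMeasure (m:ℝ) 1),
      gammaMeasure (k:ℝ) 1 ((fun x => (x, y)) ⁻¹' {p : ℝ × ℝ | p.1 ≤ z * p.2}) = 1 - h y := by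
    filter_upwards [hym] with y hy
    have hpre : ((fun x => (x, y)) ⁻¹' {p : ℝ × ℝ | p.1 ≤ z * p.2}) = Iic (z*y) := rfl
    rw [hpre, gamma_cdf_closed k hk (mul_nonneg hz hy.le), Finset.mul_sum]
    simp_rw [← mul_div_assoc]
    rw [ENNReal.ofReal_sub _ (Finset.sum_nonneg (hS_nonneg y hy)),
      ENNReal.ofReal_one, ENNReal.ofReal_sum_of_nonneg (hS_nonneg y hy), hh]
  rw [lintegral_congr_ae hinner]
  have hhm : Measurable h := by
    apply Finset.measurable_sum
    intro i _
    apply Measurable.ennreal_ofReal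
    fun_prop
  have hsum : ∫⁻ y, h y ∂(gammaMeasure (m:ℝ) 1)
      = ∑ i ∈ Finset.range k, ENNReal.ofReal
          ((Nat.factorial (m + i - 1) : ℝ) /
            ((Nat.factorial (m - 1) : ℝ) * (Nat.factorial i : ℝ)) *
          z ^ i / (1 + z) ^ (m + i)) := by
    rw [hh, lintegral_finset_sum _ (fun i _ => by
      apply Measurable.ennreal_ofReal; fun_prop)]
    exact Finset.sum_congr rfl fun i _ => term_lintegral m i hm hz
  have hle1 : h ≤ᵐ[gammaMeasure (m:ℝ) 1] fun _ => 1 := by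
    filter_upwards [hym] with y hy
    have : h y = ENNReal.ofReal
        (Real.exp (-(z*y)) * ∑ i ∈ Finset.range k, (z*y) ^ i / (Nat.factorial i)) := by
      simp only [hh]
      rw [← ENNReal.ofReal_sum_of_nonneg (hS_nonneg y hy), Finset.mul_sum]
      simp_rw [mul_div_assoc]
    rw [this]
    calc ENNReal.ofReal _ ≤ ENNReal.ofReal 1 := ENNReal.ofReal_le_ofReal (hS_le_one y hy)
      _ = 1 := ENNReal.ofReal_one
  have hhfin : ∫⁻ y, h y ∂(gammaMeasure (m:ℝ) 1) ≤ 1 := by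
    calc ∫⁻ y, h y ∂(gammaMeasure (m:ℝ) 1) ≤ ∫⁻ _, 1 ∂(gammaMeasure (m:ℝ) 1) :=
        lintegral_mono_ae hle1
      _ = 1 := by simp
  rw [lintegral_sub hhm (hhfin.trans_lt ENNReal.one_lt_top).ne hle1, lintegral_one,
    measure_univ, hsum]
  rw [ENNReal.toReal_sub_of_le (hsum ▸ hhfin) ENNReal.one_ne_top, ENNReal.toReal_one,
    ENNReal.toReal_sum (fun i _ => ENNReal.ofReal_ne_top)]
  congr 1
  exact Finset.sum_congr rfl fun i _ => ENNReal.toReal_ofReal (by positivity)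
end

section
/- Consider the coverage setup with two parameter choices: positive integers (Δ_n, Ψ_n)_{n∈ℕ} and (Δ'_n, Ψ'_n)_{n∈ℕ}, using the same locations x_n, powers P_n and SIR targets β_n. If Δ_n ≥ Δ'_n and Ψ_n ≤ Ψ'_n for every n ∈ ℕ, then the coverage probabilities satisfy P_c(Δ, Ψ) ≥ P_c(Δ', Ψ'). -/
open MeasureTheory ProbabilityTheory ENNReal

/-- Interference at the typical user from all base stations except `n`, valued in `[0,∞]`. -/
noncomputable def interference {Ω : Type*} (P : ℕ → ℝ) (x : ℕ → EuclideanSpace ℝ (Fin 2))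
    (α : ℝ) (g : ℕ → Ω → ℝ) (n : ℕ) (ω : Ω) : ℝ≥0∞ :=
  ∑' m : ℕ, if m = n then 0 else ENNReal.ofReal (P m * g m ω * ‖x m‖ ^ (-α))

/-- SIR of base station `n` at the typical user, valued in `[0,∞]`
(it equals `0` when the interference is infinite). -/
noncomputable def SIR {Ω : Type*} (P : ℕ → ℝ) (x : ℕ → EuclideanSpace ℝ (Fin 2))
    (α : ℝ) (h g : ℕ → Ω → ℝ) (n : ℕ) (ω : Ω) : ℝ≥0∞ :=
  ENNReal.ofReal (P n * h n ω * ‖x n‖ ^ (-α)) / interference P x α g n ω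


open MeasureTheory ProbabilityTheory ENNReal Real Set Filter Finset

namespace CoverageAux

/-- density of Gamma(k,1) with natural power. -/
noncomputable def pdfR (k : ℕ) (x : ℝ) : ℝ := x ^ (k - 1) * Real.exp (-x) / (Nat.factorial (k-1))

/-- explicit CDF of Gamma(k,1) on `[0,∞)`. -/
noncomputable def Ecdf (k : ℕ) (x : ℝ) : ℝ :=
  1 - Real.exp (-x) * ∑ i ∈ Finset.range k, x ^ i / (Nat.factorial i)

lemma sum_sub_deriv_sum (m : ℕ) (x : ℝ) :
    (∑ i ∈ Finset.range (m + 1), x ^ i / (Nat.factorial i))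
      - ∑ i ∈ Finset.range (m + 1), (i : ℝ) * x ^ (i - 1) / (Nat.factorial i) = x ^ m / (Nat.factorial m) := by
  induction m with
  | zero => simp
  | succ m ih =>
    rw [Finset.sum_range_succ, Finset.sum_range_succ (f := fun i => (i : ℝ) * x ^ (i - 1) / (Nat.factorial i))]
    have h1 : ((m + 1 : ℕ) : ℝ) * x ^ ((m + 1) - 1) / (Nat.factorial (m+1)) = x ^ m / (Nat.factorial m) := by
      rw [Nat.factorial_succ, Nat.add_sub_cancel]
      push_cast
      rw [mul_div_mul_left _ _ (by positivity)]
    have h2 := ih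
    push_cast at h2 ⊢
    rw [Nat.add_sub_cancel] at h1
    push_cast at h1
    linarith
  
lemma hasDerivAt_Ecdf {k : ℕ} (hk : 1 ≤ k) (x : ℝ) : HasDerivAt (Ecdf k) (pdfR k x) x := by
  obtain ⟨m, rfl⟩ : ∃ m, k = m + 1 := ⟨k - 1, (Nat.succ_pred_eq_of_pos hk).symm⟩
  have hexp : HasDerivAt (fun x : ℝ => Real.exp (-x)) (-Real.exp (-x)) x := by
    simpa [Function.comp_def] using (Real.hasDerivAt_exp (-x)).comp x (hasDerivAt_neg x)
  have hsum : HasDerivAt (fun x : ℝ => ∑ i ∈ Finset.range (m + 1), x ^ i / (Nat.factorial i))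
      (∑ i ∈ Finset.range (m + 1), (i : ℝ) * x ^ (i - 1) / (Nat.factorial i)) x := by
    apply HasDerivAt.fun_sum
    intro i _
    exact (hasDerivAt_pow i x).div_const _
  have := ((hexp.mul hsum).const_sub 1)
  refine this.congr_deriv ?_
  have hid := sum_sub_deriv_sum m x
  unfold pdfR
  rw [Nat.add_sub_cancel]
  have : x ^ m / (m.factorial : ℝ) * Real.exp (-x) = _ := congrArg (· * Real.exp (-x)) hid.symm
  rw [div_mul_eq_mul_div] at this
  rw [this]
  ring

lemma continuous_Ecdf (k : ℕ) : Continuous (Ecdf k) := by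
  unfold Ecdf
  fun_prop


lemma Ecdf_zero {k : ℕ} (hk : 1 ≤ k) : Ecdf k 0 = 0 := by
  obtain ⟨m, rfl⟩ : ∃ m, k = m + 1 := ⟨k - 1, (Nat.succ_pred_eq_of_pos hk).symm⟩
  unfold Ecdf
  rw [Finset.sum_range_succ']
  simp

lemma sum_exp_pos {k : ℕ} (hk : 1 ≤ k) {x : ℝ} (hx : 0 ≤ x) :
    0 < Real.exp (-x) * ∑ i ∈ Finset.range k, x ^ i / (Nat.factorial i) := by
  obtain ⟨m, rfl⟩ : ∃ m, k = m + 1 := ⟨k - 1, (Nat.succ_pred_eq_of_pos hk).symm⟩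
  apply mul_pos (Real.exp_pos _)
  rw [Finset.sum_range_succ']
  have h1 : ∀ i ∈ Finset.range m, (0:ℝ) ≤ x ^ (i + 1) / (Nat.factorial (i+1)) := by
    intro i _; positivity
  have := Finset.sum_nonneg h1
  simp only [pow_zero, Nat.factorial_zero, Nat.cast_one]
  positivity

lemma Ecdf_lt_one {k : ℕ} (hk : 1 ≤ k) {x : ℝ} (hx : 0 ≤ x) : Ecdf k x < 1 := by
  have := sum_exp_pos hk hx
  unfold Ecdf; linarith

lemma Ecdf_nonneg {k : ℕ} (hk : 1 ≤ k) {x : ℝ} (hx : 0 ≤ x) : 0 ≤ Ecdf k x := by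
  have h := Real.sum_le_exp_of_nonneg hx k
  have h2 : Real.exp (-x) * ∑ i ∈ Finset.range k, x ^ i / (Nat.factorial i)
      ≤ Real.exp (-x) * Real.exp x := mul_le_mul_of_nonneg_left h (Real.exp_pos _).le
  rw [← Real.exp_add] at h2
  simp only [neg_add_cancel, Real.exp_zero] at h2
  unfold Ecdf; linarith

lemma pdfR_pos {k : ℕ} {x : ℝ} (hx : 0 < x) : 0 < pdfR k x := by
  unfold pdfR; positivity

lemma strictMonoOn_Ecdf {k : ℕ} (hk : 1 ≤ k) : StrictMonoOn (Ecdf k) (Set.Ici 0) := by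
  apply strictMonoOn_of_deriv_pos (convex_Ici 0) (continuous_Ecdf k).continuousOn
  intro x hxmem
  rw [interior_Ici] at hxmem
  rw [(hasDerivAt_Ecdf hk x).deriv]
  exact pdfR_pos hxmem

lemma gammaPDFReal_eq_pdfR {k : ℕ} (hk : 1 ≤ k) {t : ℝ} (ht : 0 ≤ t) :
    gammaPDFReal k 1 t = pdfR k t := by
  obtain ⟨m, rfl⟩ : ∃ m, k = m + 1 := ⟨k - 1, (Nat.succ_pred_eq_of_pos hk).symm⟩
  rw [gammaPDFReal, if_pos ht, pdfR]
  have h1 : ((m + 1 : ℕ) : ℝ) - 1 = (m : ℕ) := by push_cast; ring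
  rw [Real.one_rpow, h1, Real.rpow_natCast]
  rw [show ((m + 1 : ℕ) : ℝ) = (m : ℝ) + 1 by push_cast; ring, Real.Gamma_nat_eq_factorial]
  rw [Nat.add_sub_cancel]
  rw [one_mul, one_div, inv_mul_eq_div, div_mul_eq_mul_div]

lemma gammaMeasure_Iio_zero (a r : ℝ) : gammaMeasure a r (Set.Iio 0) = 0 := by
  rw [gammaMeasure, withDensity_apply _ measurableSet_Iio]
  exact lintegral_gammaPDF_of_nonpos le_rfl

lemma gammaMeasure_Iic {k : ℕ} (hk : 1 ≤ k) {x : ℝ} (hx : 0 ≤ x) :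
    gammaMeasure k 1 (Set.Iic x) = ENNReal.ofReal (Ecdf k x) := by
  have hk' : (0:ℝ) < (k : ℝ) := by exact_mod_cast hk
  rw [gammaMeasure, withDensity_apply _ measurableSet_Iic,
    lintegral_Iic_eq_lintegral_Iio_add_Icc _ hx, lintegral_gammaPDF_of_nonpos le_rfl, zero_add]
  have hcong : ∫⁻ t in Set.Icc 0 x, gammaPDF k 1 t
      = ∫⁻ t in Set.Icc 0 x, ENNReal.ofReal (pdfR k t) := by
    apply setLIntegral_congr_fun measurableSet_Icc
    intro t ht
    rw [gammaPDF, gammaPDFReal_eq_pdfR hk ht.1]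
  rw [hcong]
  have hint : IntegrableOn (pdfR k) (Set.Icc 0 x) := by
    apply Continuous.integrableOn_Icc
    unfold pdfR
    fun_prop
  rw [← MeasureTheory.ofReal_integral_eq_lintegral_ofReal hint
      ((ae_restrict_iff' measurableSet_Icc).mpr (Filter.Eventually.of_forall
        fun t ht => by have h1 : (0:ℝ) ≤ t := ht.1; unfold pdfR; positivity))]
  congr 1
  rw [MeasureTheory.integral_Icc_eq_integral_Ioc, ← intervalIntegral.integral_of_le hx]
  rw [intervalIntegral.integral_eq_sub_of_hasDerivAt
    (fun t _ => hasDerivAt_Ecdf hk t)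
    (by apply Continuous.intervalIntegrable; unfold pdfR; fun_prop)]
  rw [Ecdf_zero hk, sub_zero]

lemma gammaMeasure_Iic_neg {k : ℕ} {x : ℝ} (hx : x < 0) :
    gammaMeasure k 1 (Set.Iic x) = 0 :=
  measure_mono_null (Set.Iic_subset_Iio.mpr hx) (gammaMeasure_Iio_zero _ _)

lemma isProbGamma {k : ℕ} (hk : 1 ≤ k) : IsProbabilityMeasure (gammaMeasure (k:ℝ) 1) :=
  isProbabilityMeasure_gammaMeasure (by exact_mod_cast hk) one_pos

/-- the cdf of Gamma(k,1). -/
noncomputable def Fc (k : ℕ) : ℝ → ℝ := fun x => cdf (gammaMeasure k 1) x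

lemma Fc_eq_Ecdf {k : ℕ} (hk : 1 ≤ k) {x : ℝ} (hx : 0 ≤ x) : Fc k x = Ecdf k x := by
  have := isProbGamma hk
  rw [Fc, cdf_eq_real, measureReal_def, gammaMeasure_Iic hk hx, ENNReal.toReal_ofReal (Ecdf_nonneg hk hx)]

lemma Fc_of_nonpos {k : ℕ} (hk : 1 ≤ k) {x : ℝ} (hx : x ≤ 0) : Fc k x = 0 := by
  have := isProbGamma hk
  have h0 : Fc k 0 = 0 := by rw [Fc_eq_Ecdf hk le_rfl, Ecdf_zero hk]
  have hmono : Fc k x ≤ Fc k 0 := monotone_cdf _ hx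
  have hnn : 0 ≤ Fc k x := cdf_nonneg _ x
  linarith

lemma Fc_nonneg (k : ℕ) (x : ℝ) : 0 ≤ Fc k x := cdf_nonneg _ x

lemma Fc_lt_one {k : ℕ} (hk : 1 ≤ k) (x : ℝ) : Fc k x < 1 := by
  rcases le_or_gt 0 x with hx | hx
  · rw [Fc_eq_Ecdf hk hx]; exact Ecdf_lt_one hk hx
  · rw [Fc_of_nonpos hk hx.le]; norm_num

lemma strictMonoOn_Fc {k : ℕ} (hk : 1 ≤ k) : StrictMonoOn (Fc k) (Set.Ici 0) := by
  intro a ha b hb hab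
  rw [Fc_eq_Ecdf hk ha, Fc_eq_Ecdf hk hb]
  exact strictMonoOn_Ecdf hk ha hb hab

lemma monotone_Fc (k : ℕ) : Monotone (Fc k) := monotone_cdf _

lemma Fc_anti {j k : ℕ} (hj : 1 ≤ j) (hjk : j ≤ k) (x : ℝ) : Fc k x ≤ Fc j x := by
  have hk : 1 ≤ k := hj.trans hjk
  rcases le_or_gt 0 x with hx | hx
  · rw [Fc_eq_Ecdf hk hx, Fc_eq_Ecdf hj hx]
    unfold Ecdf
    have : (∑ i ∈ Finset.range j, x ^ i / (Nat.factorial i))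
        ≤ ∑ i ∈ Finset.range k, x ^ i / (Nat.factorial i) := by
      apply Finset.sum_le_sum_of_subset_of_nonneg (Finset.range_subset_range.mpr hjk)
      intro i _ _; positivity
    nlinarith [Real.exp_pos (-x)]
  · rw [Fc_of_nonpos hk hx.le, Fc_of_nonpos hj hx.le]

lemma exists_Fc_eq {k : ℕ} (hk : 1 ≤ k) {u : ℝ} (hu0 : 0 ≤ u) (hu1 : u < 1) :
    ∃ y, 0 ≤ y ∧ Fc k y = u := by
  have := isProbGamma hk
  have htend : Filter.Tendsto (Fc k) Filter.atTop (nhds 1) := tendsto_cdf_atTop _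
  obtain ⟨M, hM⟩ := (htend.eventually (eventually_ge_nhds hu1)).exists
  have hM' : u ≤ Fc k (max M 0) := hM.trans (monotone_Fc k (le_max_left _ _))
  have hcont : ContinuousOn (Fc k) (Set.Icc 0 (max M 0)) :=
    ((continuous_Ecdf k).continuousOn).congr (fun t ht => Fc_eq_Ecdf hk ht.1)
  have hmem : u ∈ Set.Icc (Fc k 0) (Fc k (max M 0)) := by
    refine ⟨?_, hM'⟩
    rw [Fc_eq_Ecdf hk le_rfl, Ecdf_zero hk]; exact hu0
  obtain ⟨y, hy, hyu⟩ := intermediate_value_Icc (le_max_right M 0) hcont hmem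
  exact ⟨y, hy.1, hyu⟩


open Classical in
/-- quantile function of Gamma(k,1). -/
noncomputable def gammaQ (k : ℕ) (u : ℝ) : ℝ :=
  if h : 1 ≤ k ∧ 0 ≤ u ∧ u < 1 then (exists_Fc_eq h.1 h.2.1 h.2.2).choose else 0

lemma gammaQ_spec {k : ℕ} (hk : 1 ≤ k) {u : ℝ} (hu0 : 0 ≤ u) (hu1 : u < 1) :
    0 ≤ gammaQ k u ∧ Fc k (gammaQ k u) = u := by
  rw [gammaQ, dif_pos ⟨hk, hu0, hu1⟩]
  exact (exists_Fc_eq hk hu0 hu1).choose_spec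

lemma gammaQ_nonneg {k : ℕ} (hk : 1 ≤ k) {u : ℝ} (hu0 : 0 ≤ u) (hu1 : u < 1) :
    0 ≤ gammaQ k u := (gammaQ_spec hk hu0 hu1).1

lemma Fc_gammaQ {k : ℕ} (hk : 1 ≤ k) {u : ℝ} (hu0 : 0 ≤ u) (hu1 : u < 1) :
    Fc k (gammaQ k u) = u := (gammaQ_spec hk hu0 hu1).2

lemma gammaQ_le_iff {k : ℕ} (hk : 1 ≤ k) {u : ℝ} (hu0 : 0 ≤ u) (hu1 : u < 1)
    {x : ℝ} (hx : 0 ≤ x) : gammaQ k u ≤ x ↔ u ≤ Fc k x := by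
  constructor
  · intro hle
    rw [← Fc_gammaQ hk hu0 hu1]
    exact monotone_Fc k hle
  · intro hle
    by_contra hcon
    push_neg at hcon
    have := strictMonoOn_Fc hk (Set.mem_Ici.mpr hx)
      (Set.mem_Ici.mpr (gammaQ_nonneg hk hu0 hu1)) hcon
    rw [Fc_gammaQ hk hu0 hu1] at this
    linarith

lemma gammaQ_mono {k : ℕ} (hk : 1 ≤ k) {u v : ℝ} (hu0 : 0 ≤ u) (huv : u ≤ v) (hv1 : v < 1) :
    gammaQ k u ≤ gammaQ k v := by
  rw [gammaQ_le_iff hk hu0 (lt_of_le_of_lt huv hv1) (gammaQ_nonneg hk (hu0.trans huv) hv1),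
    Fc_gammaQ hk (hu0.trans huv) hv1]
  exact huv

/-- monotone transport map pushing Gamma(j,1) to Gamma(k,1). -/
noncomputable def gammaT (j k : ℕ) (x : ℝ) : ℝ := gammaQ k (Fc j x)

lemma gammaT_nonneg {j k : ℕ} (hj : 1 ≤ j) (hk : 1 ≤ k) (x : ℝ) : 0 ≤ gammaT j k x :=
  gammaQ_nonneg hk (Fc_nonneg j x) (Fc_lt_one hj x)

lemma monotone_gammaT {j k : ℕ} (hj : 1 ≤ j) (hk : 1 ≤ k) : Monotone (gammaT j k) := by
  intro a b hab
  exact gammaQ_mono hk (Fc_nonneg j a) (monotone_Fc j hab) (Fc_lt_one hj b)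

lemma measurable_gammaT {j k : ℕ} (hj : 1 ≤ j) (hk : 1 ≤ k) : Measurable (gammaT j k) :=
  (monotone_gammaT hj hk).measurable

lemma map_gammaT {j k : ℕ} (hj : 1 ≤ j) (hk : 1 ≤ k) :
    Measure.map (gammaT j k) (gammaMeasure j 1) = gammaMeasure k 1 := by
  have hpj := isProbGamma hj
  have hpk := isProbGamma hk
  have : IsProbabilityMeasure (Measure.map (gammaT j k) (gammaMeasure (j:ℝ) 1)) :=
    Measure.isProbabilityMeasure_map (measurable_gammaT hj hk).aemeasurable
  apply MeasureTheory.Measure.ext_of_Iic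
  intro a
  rw [Measure.map_apply (measurable_gammaT hj hk) measurableSet_Iic]
  rcases lt_or_ge a 0 with ha | ha
  · rw [gammaMeasure_Iic_neg ha]
    have : gammaT j k ⁻¹' Set.Iic a = ∅ := by
      apply Set.eq_empty_iff_forall_notMem.mpr
      intro y hy
      exact absurd (le_trans (gammaT_nonneg hj hk y) hy) (not_le.mpr ha)
    rw [this, measure_empty]
  · have hu0 : 0 ≤ Fc k a := Fc_nonneg k a
    have hu1 : Fc k a < 1 := Fc_lt_one hk a
    have hpre : gammaT j k ⁻¹' Set.Iic a = Set.Iic (gammaQ j (Fc k a)) := by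
      ext y
      simp only [Set.mem_preimage, Set.mem_Iic, gammaT]
      rw [gammaQ_le_iff hk (Fc_nonneg j y) (Fc_lt_one hj y) ha]
      constructor
      · intro hle
        by_contra hcon
        push_neg at hcon
        have := strictMonoOn_Fc hj (Set.mem_Ici.mpr (gammaQ_nonneg hj hu0 hu1))
          (Set.mem_Ici.mpr ((gammaQ_nonneg hj hu0 hu1).trans hcon.le)) hcon
        rw [Fc_gammaQ hj hu0 hu1] at this
        linarith
      · intro hle
        have := monotone_Fc j hle
        rw [Fc_gammaQ hj hu0 hu1] at this
        exact this
    rw [hpre, ← ofReal_cdf (gammaMeasure (j:ℝ) 1) (gammaQ j (Fc k a)),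
      ← ofReal_cdf (gammaMeasure (k:ℝ) 1) a]
    congr 1
    exact Fc_gammaQ hj hu0 hu1

lemma gammaT_le_self {j k : ℕ} (hj : 1 ≤ j) (hk : 1 ≤ k) (hkj : k ≤ j) {x : ℝ} (hx : 0 ≤ x) :
    gammaT j k x ≤ x := by
  rw [gammaT, gammaQ_le_iff hk (Fc_nonneg j x) (Fc_lt_one hj x) hx]
  exact Fc_anti hk hkj x

lemma self_le_gammaT {j k : ℕ} (hj : 1 ≤ j) (hk : 1 ≤ k) (hjk : j ≤ k) {x : ℝ} (hx : 0 ≤ x) :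
    x ≤ gammaT j k x := by
  by_contra hcon
  push_neg at hcon
  have hQnn : 0 ≤ gammaT j k x := gammaT_nonneg hj hk x
  have := strictMonoOn_Fc hk (Set.mem_Ici.mpr hQnn) (Set.mem_Ici.mpr hx) hcon
  rw [gammaT, Fc_gammaQ hk (Fc_nonneg j x) (Fc_lt_one hj x)] at this
  exact absurd (lt_of_lt_of_le this (Fc_anti hj hjk x)) (lt_irrefl _)


lemma joint_map_eq {ι : Type*} {Ω Ω' : Type*} [MeasurableSpace Ω] [MeasurableSpace Ω']
    (μ : Measure Ω) (μ' : Measure Ω') [IsProbabilityMeasure μ] [IsProbabilityMeasure μ']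
    (f : ι → Ω → ℝ) (f' : ι → Ω' → ℝ)
    (hf : ∀ i, Measurable (f i)) (hf' : ∀ i, Measurable (f' i))
    (hind : ProbabilityTheory.iIndepFun f μ)
    (hind' : ProbabilityTheory.iIndepFun f' μ')
    (hmarg : ∀ i, Measure.map (f i) μ = Measure.map (f' i) μ') :
    Measure.map (fun ω i => f i ω) μ = Measure.map (fun ω' i => f' i ω') μ' := by
  have hJ : Measurable (fun ω i => f i ω) := measurable_pi_lambda _ hf
  have hJ' : Measurable (fun ω i => f' i ω) := measurable_pi_lambda _ hf'
  have hPJ : IsProbabilityMeasure (Measure.map (fun ω i => f i ω) μ) :=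
    Measure.isProbabilityMeasure_map hJ.aemeasurable
  have hPJ' : IsProbabilityMeasure (Measure.map (fun ω i => f' i ω) μ') :=
    Measure.isProbabilityMeasure_map hJ'.aemeasurable
  refine MeasureTheory.ext_of_generate_finite _
    MeasureTheory.generateFrom_squareCylinders.symm
    (MeasureTheory.isPiSystem_squareCylinders (fun _ => MeasurableSpace.isPiSystem_measurableSet)
      (fun _ => Set.mem_setOf.mpr MeasurableSet.univ)) ?_ (by simp)
  rintro S ⟨I, t, ht, rfl⟩
  simp only [Set.mem_univ_pi, Set.mem_setOf_eq] at ht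
  have htm : MeasurableSet ((I : Set ι).pi t) :=
    MeasurableSet.pi (Finset.countable_toSet _) (fun i _ => ht i)
  have hpre1 : (fun ω i => f i ω) ⁻¹' ((I : Set ι).pi t) = ⋂ i ∈ I, f i ⁻¹' t i := by
    ext ω; simp [Set.mem_pi]
  have hpre2 : (fun ω i => f' i ω) ⁻¹' ((I : Set ι).pi t) = ⋂ i ∈ I, f' i ⁻¹' t i := by
    ext ω; simp [Set.mem_pi]
  rw [Measure.map_apply hJ htm, Measure.map_apply hJ' htm, hpre1, hpre2,
    hind.meas_biInter (fun i _ => ⟨t i, ht i, rfl⟩),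
    hind'.meas_biInter (fun i _ => ⟨t i, ht i, rfl⟩)]
  refine Finset.prod_congr rfl (fun i _ => ?_)
  rw [← Measure.map_apply (hf i) (ht i), ← Measure.map_apply (hf' i) (ht i), hmarg i]

end CoverageAux


/-- Coverage ordering: larger direct-link shapes `Δ` and smaller interfering shapes `Ψ`
give a larger coverage probability. -/
theorem coverage_ordering
    (α : ℝ) (hα : 2 < α)
    (x : ℕ → EuclideanSpace ℝ (Fin 2)) (hx : ∀ n, x n ≠ 0)
    (P : ℕ → ℝ) (hP : ∀ n, 0 < P n)
    (β : ℕ → ℝ) (hβ : ∀ n, 0 < β n)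
    (Δ Ψ Δ' Ψ' : ℕ → ℕ)
    (hΔpos : ∀ n, 0 < Δ n) (hΨpos : ∀ n, 0 < Ψ n)
    (hΔ'pos : ∀ n, 0 < Δ' n) (hΨ'pos : ∀ n, 0 < Ψ' n)
    (hΔ : ∀ n, Δ' n ≤ Δ n) (hΨ : ∀ n, Ψ n ≤ Ψ' n)
    {Ω : Type*} [MeasurableSpace Ω] (μ : Measure Ω) [IsProbabilityMeasure μ]
    {Ω' : Type*} [MeasurableSpace Ω'] (μ' : Measure Ω') [IsProbabilityMeasure μ']
    (h g : ℕ → Ω → ℝ) (h' g' : ℕ → Ω' → ℝ)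
    (hhm : ∀ n, Measurable (h n)) (hgm : ∀ n, Measurable (g n))
    (hh'm : ∀ n, Measurable (h' n)) (hg'm : ∀ n, Measurable (g' n))
    (hindep : iIndepFun
      (Sum.elim h g) μ)
    (hindep' : iIndepFun
      (Sum.elim h' g') μ')
    (hhd : ∀ n, Measure.map (h n) μ = gammaMeasure (Δ n) 1)
    (hgd : ∀ n, Measure.map (g n) μ = gammaMeasure (Ψ n) 1)
    (hh'd : ∀ n, Measure.map (h' n) μ' = gammaMeasure (Δ' n) 1)
    (hg'd : ∀ n, Measure.map (g' n) μ' = gammaMeasure (Ψ' n) 1) :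
    μ' {ω | ∃ n : ℕ, ENNReal.ofReal (β n) < SIR P x α h' g' n ω} ≤
      μ {ω | ∃ n : ℕ, ENNReal.ofReal (β n) < SIR P x α h g n ω} := by
  classical
  have hJ' : Measurable (fun ω' (i : ℕ ⊕ ℕ) => Sum.elim h' g' i ω') :=
    measurable_pi_lambda _ (fun i => by rcases i with n | n; exacts [hh'm n, hg'm n])
  set φ : ℕ ⊕ ℕ → ℝ → ℝ :=
    Sum.elim (fun n => CoverageAux.gammaT (Δ n) (Δ' n))
      (fun n => CoverageAux.gammaT (Ψ n) (Ψ' n)) with hφ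
  have hφm : ∀ i, Measurable (φ i) := by
    rintro (n | n)
    · exact CoverageAux.measurable_gammaT (hΔpos n) (hΔ'pos n)
    · exact CoverageAux.measurable_gammaT (hΨpos n) (hΨ'pos n)
  set ht : ℕ → Ω → ℝ := fun n ω => CoverageAux.gammaT (Δ n) (Δ' n) (h n ω) with hhtdef
  set gt : ℕ → Ω → ℝ := fun n ω => CoverageAux.gammaT (Ψ n) (Ψ' n) (g n ω) with hgtdef
  have helim : (fun i => φ i ∘ Sum.elim h g i) = Sum.elim ht gt := by
    funext i; rcases i with n | n <;> rfl
  have hindep2 : iIndepFun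
      (Sum.elim ht gt) μ := helim ▸ hindep.comp φ hφm
  have helimm : ∀ i, Measurable (Sum.elim ht gt i) := by
    rintro (n | n)
    · exact (hφm (Sum.inl n)).comp (hhm n)
    · exact (hφm (Sum.inr n)).comp (hgm n)
  have hmarg : ∀ i, Measure.map (Sum.elim ht gt i) μ = Measure.map (Sum.elim h' g' i) μ' := by
    rintro (n | n)
    · show Measure.map (CoverageAux.gammaT (Δ n) (Δ' n) ∘ h n) μ = Measure.map (h' n) μ'
      rw [← Measure.map_map (CoverageAux.measurable_gammaT (hΔpos n) (hΔ'pos n)) (hhm n),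
        hhd n, CoverageAux.map_gammaT (hΔpos n) (hΔ'pos n), hh'd n]
    · show Measure.map (CoverageAux.gammaT (Ψ n) (Ψ' n) ∘ g n) μ = Measure.map (g' n) μ'
      rw [← Measure.map_map (CoverageAux.measurable_gammaT (hΨpos n) (hΨ'pos n)) (hgm n),
        hgd n, CoverageAux.map_gammaT (hΨpos n) (hΨ'pos n), hg'd n]
  have hjoint := CoverageAux.joint_map_eq μ μ' (Sum.elim ht gt) (Sum.elim h' g')
    helimm (fun i => by rcases i with n | n; exacts [hh'm n, hg'm n]) hindep2 hindep' hmarg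
  set A : Set ((ℕ ⊕ ℕ) → ℝ) := {F | ∃ n : ℕ, ENNReal.ofReal (β n) <
      ENNReal.ofReal (P n * F (Sum.inl n) * ‖x n‖ ^ (-α)) /
        ∑' m : ℕ, if m = n then 0 else ENNReal.ofReal (P m * F (Sum.inr m) * ‖x m‖ ^ (-α))}
    with hAdef
  have hAm : MeasurableSet A := by
    rw [hAdef, Set.setOf_exists]
    refine MeasurableSet.iUnion fun n => ?_
    have hnum : Measurable fun F : (ℕ ⊕ ℕ) → ℝ =>
        ENNReal.ofReal (P n * F (Sum.inl n) * ‖x n‖ ^ (-α)) :=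
      ((((measurable_pi_apply (Sum.inl n)) : Measurable fun F : (ℕ ⊕ ℕ) → ℝ => F (Sum.inl n)).const_mul (P n)).mul_const _).ennreal_ofReal
    have hden : Measurable fun F : (ℕ ⊕ ℕ) → ℝ =>
        ∑' m : ℕ, if m = n then 0 else ENNReal.ofReal (P m * F (Sum.inr m) * ‖x m‖ ^ (-α)) := by
      refine Measurable.ennreal_tsum fun m => ?_
      split_ifs
      · exact measurable_const
      · exact ((((measurable_pi_apply (Sum.inr m)) : Measurable fun F : (ℕ ⊕ ℕ) → ℝ => F (Sum.inr m)).const_mul (P m)).mul_const _).ennreal_ofReal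
    exact measurableSet_lt measurable_const (hnum.div hden)
  have e' : μ' {ω | ∃ n : ℕ, ENNReal.ofReal (β n) < SIR P x α h' g' n ω} =
      Measure.map (fun ω' (i : ℕ ⊕ ℕ) => Sum.elim h' g' i ω') μ' A := by
    rw [Measure.map_apply hJ' hAm]
    rfl
  have hJt : Measurable (fun ω (i : ℕ ⊕ ℕ) => Sum.elim ht gt i ω) :=
    measurable_pi_lambda _ helimm
  have et : Measure.map (fun ω (i : ℕ ⊕ ℕ) => Sum.elim ht gt i ω) μ A =
      μ {ω | ∃ n : ℕ, ENNReal.ofReal (β n) < SIR P x α ht gt n ω} := by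
    rw [Measure.map_apply hJt hAm]
    rfl
  set N : Set Ω := (⋃ n, h n ⁻¹' Set.Iio 0) ∪ ⋃ n, g n ⁻¹' Set.Iio 0 with hNdef
  have hNnull : μ N = 0 := by
    refine measure_union_null (measure_iUnion_null fun n => ?_)
      (measure_iUnion_null fun n => ?_)
    · have h0 := CoverageAux.gammaMeasure_Iio_zero (Δ n) 1
      rw [← hhd n, Measure.map_apply (hhm n) measurableSet_Iio] at h0
      exact h0
    · have h0 := CoverageAux.gammaMeasure_Iio_zero (Ψ n) 1
      rw [← hgd n, Measure.map_apply (hgm n) measurableSet_Iio] at h0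
      exact h0
  have hsub : {ω | ∃ n : ℕ, ENNReal.ofReal (β n) < SIR P x α ht gt n ω} ⊆
      {ω | ∃ n : ℕ, ENNReal.ofReal (β n) < SIR P x α h g n ω} ∪ N := by
    intro ω hω
    by_cases hωN : ω ∈ N
    · exact Or.inr hωN
    left
    obtain ⟨n, hn⟩ := hω
    have hhn : ∀ m, 0 ≤ h m ω := by
      intro m; by_contra hc; push_neg at hc
      exact hωN (Or.inl (Set.mem_iUnion.mpr ⟨m, hc⟩))
    have hgn : ∀ m, 0 ≤ g m ω := by
      intro m; by_contra hc; push_neg at hc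
      exact hωN (Or.inr (Set.mem_iUnion.mpr ⟨m, hc⟩))
    refine ⟨n, lt_of_lt_of_le hn ?_⟩
    simp only [SIR, interference]
    refine ENNReal.div_le_div ?_ ?_
    · apply ENNReal.ofReal_le_ofReal
      refine mul_le_mul_of_nonneg_right ?_ (Real.rpow_nonneg (norm_nonneg _) _)
      exact mul_le_mul_of_nonneg_left
        (CoverageAux.gammaT_le_self (hΔpos n) (hΔ'pos n) (hΔ n) (hhn n)) (hP n).le
    · refine ENNReal.tsum_le_tsum fun m => ?_
      by_cases hm : m = n
      · simp [hm]
      · simp only [if_neg hm]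
        apply ENNReal.ofReal_le_ofReal
        refine mul_le_mul_of_nonneg_right ?_ (Real.rpow_nonneg (norm_nonneg _) _)
        exact mul_le_mul_of_nonneg_left
          (CoverageAux.self_le_gammaT (hΨpos m) (hΨ'pos m) (hΨ m) (hgn m)) (hP m).le
  calc μ' {ω | ∃ n : ℕ, ENNReal.ofReal (β n) < SIR P x α h' g' n ω}
      = Measure.map (fun ω' (i : ℕ ⊕ ℕ) => Sum.elim h' g' i ω') μ' A := e'
    _ = Measure.map (fun ω (i : ℕ ⊕ ℕ) => Sum.elim ht gt i ω) μ A := by rw [hjoint]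
    _ = μ {ω | ∃ n : ℕ, ENNReal.ofReal (β n) < SIR P x α ht gt n ω} := et
    _ ≤ μ ({ω | ∃ n : ℕ, ENNReal.ofReal (β n) < SIR P x α h g n ω} ∪ N) :=
        measure_mono hsub
    _ ≤ μ {ω | ∃ n : ℕ, ENNReal.ofReal (β n) < SIR P x α h g n ω} + μ N :=
        measure_union_le _ _
    _ = μ {ω | ∃ n : ℕ, ENNReal.ofReal (β n) < SIR P x α h g n ω} := by
        rw [hNnull, add_zero]
end

section
/- Consider the coverage setup with a fixed assignment of antenna numbers M_n ≥ 2 to the base stations, the same locations x_n, powers P_n and SIR targets β_n for both systems. In the SU-BF system each base station serves one user, so Δ_n = M_n and Ψ_n = 1 for all n; in the SDMA system each base station serves Ψ'_n users with 1 < Ψ'_n ≤ M_n, so Δ'_n = M_n − Ψ'_n + 1. Then the coverage probability of the SU-BF system is greater than or equal to that of the SDMA system: P_c(Δ, Ψ) ≥ P_c(Δ', Ψ'). -/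
open MeasureTheory ProbabilityTheory ENNReal

section CovAuxSection
open Nat Real Set Filter Topology

namespace CovAux

/-- Explicit CDF of Gamma(k,1): `1 - e^{-t} ∑_{j<k} t^j/j!`. -/
noncomputable def myF (k : ℕ) (t : ℝ) : ℝ :=
  1 - Real.exp (-t) * ∑ j ∈ Finset.range k, t ^ j / (j ! : ℝ)

/-- Density of Gamma(k+1,1). -/
noncomputable def myp (k : ℕ) (t : ℝ) : ℝ := t ^ k * Real.exp (-t) / (k ! : ℝ)

lemma myF_succ (k : ℕ) (t : ℝ) :
    myF (k + 1) t = myF k t - Real.exp (-t) * (t ^ k / (k ! : ℝ)) := by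
  simp only [myF, Finset.sum_range_succ, mul_add]; ring

lemma myF_at_zero (k : ℕ) : myF (k + 1) 0 = 0 := by
  rw [myF, Finset.sum_range_succ']
  simp

lemma continuous_myF (k : ℕ) : Continuous (myF k) := by
  unfold myF; fun_prop

lemma hasDeriv_term (j : ℕ) (t : ℝ) :
    HasDerivAt (fun t => Real.exp (-t) * (t ^ (j + 1) / ((j+1)! : ℝ)))
      (Real.exp (-t) * (t ^ j / (j ! : ℝ)) - Real.exp (-t) * (t ^ (j + 1) / ((j+1)! : ℝ))) t := by
  have h1 : HasDerivAt (fun t : ℝ => Real.exp (-t)) (-Real.exp (-t)) t := by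
    exact ((Real.hasDerivAt_exp (-t)).comp t (hasDerivAt_neg t)).congr_deriv (by ring)
  have h2 : HasDerivAt (fun t : ℝ => t ^ (j + 1) / ((j+1)! : ℝ))
      ((((j : ℝ) + 1) * t ^ j) / ((j+1)! : ℝ)) t := by
    have := (hasDerivAt_pow (j + 1) t).div_const (((j + 1)! : ℝ))
    simpa using this
  have h := h1.mul h2
  refine h.congr_deriv ?_
  have hfac : ((j + 1)! : ℝ) = ((j : ℝ) + 1) * (j ! : ℝ) := by
    rw [Nat.factorial_succ]; push_cast; ring
  have hj : ((j ! : ℝ) : ℝ) ≠ 0 := by positivity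
  have hj1 : ((j : ℝ) + 1) ≠ 0 := by positivity
  rw [hfac]
  field_simp
  ring

lemma hasDerivAt_myF (k : ℕ) (t : ℝ) : HasDerivAt (myF (k + 1)) (myp k t) t := by
  induction k generalizing t with
  | zero =>
      have h0 : myF 1 = fun t => 1 - Real.exp (-t) := by
        funext t; simp [myF]
      rw [h0]
      have h1 : HasDerivAt (fun t : ℝ => Real.exp (-t)) (-Real.exp (-t)) t := by
        exact ((Real.hasDerivAt_exp (-t)).comp t (hasDerivAt_neg t)).congr_deriv (by ring)
      have := (hasDerivAt_const t (1 : ℝ)).sub h1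
      refine this.congr_deriv ?_
      simp [myp]
  | succ k ih =>
      have h0 : myF (k + 2) = fun t => myF (k + 1) t -
          Real.exp (-t) * (t ^ (k + 1) / ((k+1)! : ℝ)) := by
        funext t; exact myF_succ (k + 1) t
      rw [h0]
      have := (ih t).sub (hasDeriv_term k t)
      refine this.congr_deriv ?_
      simp only [myp]
      ring

lemma myF_strictMonoOn (k : ℕ) : StrictMonoOn (myF (k + 1)) (Ici 0) := by
  refine strictMonoOn_of_deriv_pos (convex_Ici 0) (continuous_myF (k + 1)).continuousOn ?_
  intro t ht
  rw [interior_Ici] at ht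
  rw [(hasDerivAt_myF k t).deriv]
  have : (0 : ℝ) < t := ht
  simp only [myp]
  positivity

lemma myF_monotoneOn (k : ℕ) : MonotoneOn (myF (k + 1)) (Ici 0) :=
  (myF_strictMonoOn k).monotoneOn

lemma myF_nonneg (k : ℕ) {t : ℝ} (ht : 0 ≤ t) : 0 ≤ myF (k + 1) t := by
  have := myF_monotoneOn k (self_mem_Ici) (mem_Ici.mpr ht) ht
  rwa [myF_at_zero] at this

lemma myF_lt_one (k : ℕ) {t : ℝ} (ht : 0 ≤ t) : myF (k + 1) t < 1 := by
  have h1 : (1 : ℝ) ≤ ∑ j ∈ Finset.range (k + 1), t ^ j / (j ! : ℝ) := by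
    have := Finset.single_le_sum (f := fun j => t ^ j / (j ! : ℝ))
      (fun j _ => by positivity) (Finset.mem_range.mpr (Nat.succ_pos k))
    simpa using this
  have h2 : 0 < Real.exp (-t) * ∑ j ∈ Finset.range (k + 1), t ^ j / (j ! : ℝ) := by
    have := Real.exp_pos (-t)
    nlinarith
  rw [myF]; linarith

lemma myF_antitone {k l : ℕ} (hlk : l ≤ k) {t : ℝ} (ht : 0 ≤ t) : myF k t ≤ myF l t := by
  induction k with
  | zero => simp_all
  | succ k ih =>
      rcases Nat.lt_or_ge l (k+1) with h | h
      · have hk : l ≤ k := Nat.lt_succ_iff.mp h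
        refine le_trans ?_ (ih hk)
        rw [myF_succ]
        have : 0 ≤ Real.exp (-t) * (t ^ k / (k ! : ℝ)) := by positivity
        linarith
      · have : l = k + 1 := le_antisymm hlk h
        simp [this]

lemma myF_tendsto (k : ℕ) : Tendsto (myF (k + 1)) atTop (nhds 1) := by
  have heq : myF (k + 1) = fun t =>
      1 - ∑ j ∈ Finset.range (k + 1), (t ^ j * Real.exp (-t)) / (j ! : ℝ) := by
    funext t
    rw [myF, Finset.mul_sum]
    congr 1
    exact Finset.sum_congr rfl fun j _ => by ring
  rw [heq]
  have h0 : Tendsto (fun t : ℝ => ∑ j ∈ Finset.range (k + 1),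
      (t ^ j * Real.exp (-t)) / (j ! : ℝ)) atTop (nhds 0) := by
    have := tendsto_finset_sum (Finset.range (k + 1))
      (fun j _ => (tendsto_pow_mul_exp_neg_atTop_nhds_zero j).div_const ((j ! : ℝ)))
    simpa using this
  simpa using tendsto_const_nhds.sub h0

lemma gamma_Iic_neg (a r : ℝ) {t : ℝ} (ht : t < 0) :
    gammaMeasure a r (Iic t) = 0 := by
  rw [gammaMeasure, withDensity_apply _ measurableSet_Iic]
  refine le_antisymm ?_ _root_.zero_le
  have hsub : Iic t ⊆ Iio 0 := fun x hx => lt_of_le_of_lt hx ht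
  calc ∫⁻ x in Iic t, gammaPDF a r x ≤ ∫⁻ x in Iio 0, gammaPDF a r x :=
        lintegral_mono_set hsub
    _ = 0 := lintegral_gammaPDF_of_nonpos le_rfl

lemma continuous_myp (k : ℕ) : Continuous (myp k) := by
  unfold myp; fun_prop

lemma gamma_Iic (k : ℕ) {t : ℝ} (ht : 0 ≤ t) :
    gammaMeasure (↑(k + 1) : ℝ) 1 (Iic t) = ENNReal.ofReal (myF (k + 1) t) := by
  rw [gammaMeasure, withDensity_apply _ measurableSet_Iic,
    lintegral_Iic_eq_lintegral_Iio_add_Icc _ ht, lintegral_gammaPDF_of_nonpos le_rfl, zero_add]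
  have hpdf : ∀ x ∈ Icc (0:ℝ) t, gammaPDF (↑(k + 1) : ℝ) 1 x = ENNReal.ofReal (myp k x) := by
    intro x hx
    rw [gammaPDF_of_nonneg hx.1]
    congr 1
    have h1 : ((k + 1 : ℕ) : ℝ) - 1 = ((k : ℕ) : ℝ) := by push_cast; ring
    have h2 : Real.Gamma ((k + 1 : ℕ) : ℝ) = (k ! : ℝ) := by
      push_cast
      exact Real.Gamma_nat_eq_factorial k
    rw [h1, h2]
    simp only [Real.rpow_natCast]
    rw [one_pow, one_mul, myp]
    ring
  rw [setLIntegral_congr_fun measurableSet_Icc hpdf]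
  have hint : IntegrableOn (myp k) (Icc 0 t) := (continuous_myp k).integrableOn_Icc
  have hnn : 0 ≤ᵐ[volume.restrict (Icc (0:ℝ) t)] myp k := by
    refine (ae_restrict_iff' measurableSet_Icc).mpr (ae_of_all _ fun x hx => ?_)
    have := hx.1
    simp only [myp]
    positivity
  rw [← ofReal_integral_eq_lintegral_ofReal hint hnn]
  congr 1
  have hIcc : ∫ x in Icc (0:ℝ) t, myp k x = ∫ x in (0:ℝ)..t, myp k x := by
    rw [intervalIntegral.integral_of_le ht, integral_Icc_eq_integral_Ioc]
  rw [hIcc, intervalIntegral.integral_eq_sub_of_hasDerivAt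
    (fun x _ => hasDerivAt_myF k x) ((continuous_myp k).intervalIntegrable 0 t),
    myF_at_zero, sub_zero]

/-- Generalized inverse of `myF l`. -/
noncomputable def Finv (l : ℕ) (u : ℝ) : ℝ := sInf {y : ℝ | 0 ≤ y ∧ u ≤ myF l y}

section Finv

variable {l : ℕ} {u : ℝ}

lemma Finv_set_nonempty (hu1 : u < 1) : {y : ℝ | 0 ≤ y ∧ u ≤ myF (l + 1) y}.Nonempty := by
  have h := (myF_tendsto l).eventually (eventually_gt_nhds hu1)
  obtain ⟨y, hy1, hy2⟩ := (h.and (eventually_ge_atTop (0:ℝ))).exists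
  exact ⟨y, hy2, hy1.le⟩

lemma Finv_set_bddBelow : BddBelow {y : ℝ | 0 ≤ y ∧ u ≤ myF (l + 1) y} :=
  ⟨0, fun _ hy => hy.1⟩

lemma Finv_set_closed : IsClosed {y : ℝ | 0 ≤ y ∧ u ≤ myF (l + 1) y} := by
  have : {y : ℝ | 0 ≤ y ∧ u ≤ myF (l + 1) y}
      = Ici 0 ∩ {y | u ≤ myF (l + 1) y} := by ext y; simp [and_comm]
  rw [this]
  exact isClosed_Ici.inter (isClosed_le continuous_const (continuous_myF (l + 1)))

lemma Finv_mem (hu1 : u < 1) :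
    Finv (l + 1) u ∈ {y : ℝ | 0 ≤ y ∧ u ≤ myF (l + 1) y} :=
  Finv_set_closed.csInf_mem (Finv_set_nonempty hu1) Finv_set_bddBelow

lemma Finv_nonneg (hu1 : u < 1) : 0 ≤ Finv (l + 1) u := (Finv_mem hu1).1

lemma myF_Finv (hu0 : 0 ≤ u) (hu1 : u < 1) : myF (l + 1) (Finv (l + 1) u) = u := by
  obtain ⟨h0, hle⟩ := Finv_mem (l := l) hu1
  obtain ⟨z, hz, hfz⟩ := intermediate_value_Icc h0 (continuous_myF (l + 1)).continuousOn
    (show u ∈ Icc (myF (l + 1) 0) (myF (l + 1) (Finv (l + 1) u)) by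
      rw [myF_at_zero]; exact ⟨hu0, hle⟩)
  have h1 : Finv (l + 1) u ≤ z := csInf_le Finv_set_bddBelow ⟨hz.1, hfz.ge⟩
  have h2 : z = Finv (l + 1) u := le_antisymm hz.2 h1
  rw [← h2, hfz]

lemma le_Finv_iff (hu0 : 0 ≤ u) (hu1 : u < 1) {x : ℝ} (hx : 0 ≤ x) :
    x ≤ Finv (l + 1) u ↔ myF (l + 1) x ≤ u := by
  constructor
  · intro h
    have := myF_monotoneOn l (mem_Ici.mpr hx) (mem_Ici.mpr (Finv_nonneg hu1)) h
    rwa [myF_Finv hu0 hu1] at this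
  · intro h
    refine le_csInf (Finv_set_nonempty hu1) fun y hy => ?_
    exact ((myF_strictMonoOn l).le_iff_le (mem_Ici.mpr hx) (mem_Ici.mpr hy.1)).mp
      (le_trans h hy.2)

lemma Finv_le_iff (hu0 : 0 ≤ u) (hu1 : u < 1) {t : ℝ} (ht : 0 ≤ t) :
    Finv (l + 1) u ≤ t ↔ u ≤ myF (l + 1) t := by
  constructor
  · intro h
    have := myF_monotoneOn l (mem_Ici.mpr (Finv_nonneg hu1)) (mem_Ici.mpr ht) h
    rwa [myF_Finv hu0 hu1] at this
  · intro h
    exact csInf_le Finv_set_bddBelow ⟨ht, h⟩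

end Finv

/-- Monotone coupling map sending `Gamma(k,1)` to `Gamma(l,1)`. -/
noncomputable def phi (k l : ℕ) (x : ℝ) : ℝ :=
  if x ≤ 0 then x else Finv l (myF k x)

lemma myF_mem01 (k : ℕ) {x : ℝ} (hx : 0 ≤ x) :
    0 ≤ myF (k + 1) x ∧ myF (k + 1) x < 1 :=
  ⟨myF_nonneg k hx, myF_lt_one k hx⟩

lemma phi_monotone (k l : ℕ) : Monotone (phi (k + 1) (l + 1)) := by
  intro a b hab
  unfold phi
  split_ifs with h1 h2 h2
  · exact hab
  · push_neg at h2
    have hb := myF_mem01 k h2.le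
    exact le_trans h1 (Finv_nonneg hb.2)
  · push_neg at h1; linarith
  · push_neg at h1 h2
    have ha := myF_mem01 k h1.le
    have hb := myF_mem01 k h2.le
    rw [Finv_le_iff ha.1 ha.2 (Finv_nonneg hb.2)]
    rw [myF_Finv hb.1 hb.2]
    exact myF_monotoneOn k (mem_Ici.mpr h1.le) (mem_Ici.mpr h2.le) hab

lemma phi_measurable (k l : ℕ) : Measurable (phi (k + 1) (l + 1)) :=
  (phi_monotone k l).measurable

lemma phi_le_self (k l : ℕ) (hlk : l ≤ k) (x : ℝ) : phi (k + 1) (l + 1) x ≤ x := by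
  unfold phi
  split_ifs with h
  · exact le_rfl
  · push_neg at h
    have hu := myF_mem01 k h.le
    rw [Finv_le_iff hu.1 hu.2 h.le]
    exact myF_antitone (Nat.succ_le_succ hlk) h.le

lemma self_le_phi (k l : ℕ) (hkl : k ≤ l) (x : ℝ) : x ≤ phi (k + 1) (l + 1) x := by
  unfold phi
  split_ifs with h
  · exact le_rfl
  · push_neg at h
    have hu := myF_mem01 k h.le
    rw [le_Finv_iff hu.1 hu.2 h.le]
    exact myF_antitone (Nat.succ_le_succ hkl) h.le

lemma map_phi (k l : ℕ) :
    Measure.map (phi (k + 1) (l + 1)) (gammaMeasure (↑(k + 1) : ℝ) 1)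
      = gammaMeasure (↑(l + 1) : ℝ) 1 := by
  have hk1 : (0:ℝ) < ↑(k + 1) := by positivity
  have hl1 : (0:ℝ) < ↑(l + 1) := by positivity
  haveI := isProbabilityMeasure_gammaMeasure hk1 one_pos
  haveI := isProbabilityMeasure_gammaMeasure hl1 one_pos
  haveI : IsProbabilityMeasure
      (Measure.map (phi (k + 1) (l + 1)) (gammaMeasure (↑(k + 1) : ℝ) 1)) :=
    Measure.isProbabilityMeasure_map (phi_measurable k l).aemeasurable
  refine Measure.ext_of_Iic _ _ fun t => ?_
  rw [Measure.map_apply (phi_measurable k l) measurableSet_Iic]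
  by_cases ht : 0 ≤ t
  · have hu := myF_mem01 l ht
    have hpre : phi (k + 1) (l + 1) ⁻¹' Iic t = Iic (Finv (k + 1) (myF (l + 1) t)) := by
      ext y
      simp only [mem_preimage, mem_Iic, phi]
      split_ifs with hy
      · have h0 : 0 ≤ Finv (k + 1) (myF (l + 1) t) := Finv_nonneg hu.2
        constructor <;> intro <;> linarith
      · push_neg at hy
        have hv := myF_mem01 k hy.le
        rw [Finv_le_iff hv.1 hv.2 ht, le_Finv_iff hu.1 hu.2 hy.le]
    rw [hpre, gamma_Iic k (Finv_nonneg hu.2), gamma_Iic l ht, myF_Finv hu.1 hu.2]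
  · push_neg at ht
    have hpre : phi (k + 1) (l + 1) ⁻¹' Iic t = Iic t := by
      ext y
      simp only [mem_preimage, mem_Iic, phi]
      split_ifs with hy
      · tauto
      · push_neg at hy
        have hv := myF_mem01 k hy.le
        have h0 : 0 ≤ Finv (l + 1) (myF (k + 1) y) := Finv_nonneg hv.2
        constructor <;> intro <;> linarith
    rw [hpre, gamma_Iic_neg _ _ ht, gamma_Iic_neg _ _ ht]

section Law

variable {ι : Type*} {Ω : Type*} [MeasurableSpace Ω] {Ω' : Type*} [MeasurableSpace Ω']

lemma map_restrict_eq_pi (μ : Measure Ω) [IsProbabilityMeasure μ]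
    (f : ι → Ω → ℝ) (hf : ∀ i, Measurable (f i))
    (hind : iIndepFun f μ) (t : Finset ι) :
    Measure.map (fun ω => fun i : t => f i ω) μ
      = Measure.pi (fun i : t => Measure.map (f (i : ι)) μ) := by
  classical
  haveI : ∀ i : t, IsProbabilityMeasure (Measure.map (f (i : ι)) μ) :=
    fun i => Measure.isProbabilityMeasure_map (hf _).aemeasurable
  refine (Measure.pi_eq fun s hs => ?_).symm
  rw [Measure.map_apply (measurable_pi_lambda _ fun i => hf _) (MeasurableSet.univ_pi hs)]
  set sets : ι → Set ℝ := fun i => if h : i ∈ t then s ⟨i, h⟩ else univ with hsets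
  have hpre : (fun ω => fun i : t => f (i : ι) ω) ⁻¹' (univ.pi s)
      = ⋂ i ∈ t, f i ⁻¹' sets i := by
    ext ω
    simp only [mem_preimage, Set.mem_pi, mem_univ, forall_true_left, mem_iInter, hsets]
    constructor
    · intro h i hi
      simp only [dif_pos hi]
      exact h ⟨i, hi⟩
    · intro h i
      have := h (i : ι) i.2
      simpa only [dif_pos i.2] using this
  rw [hpre, hind.measure_inter_preimage_eq_mul t
    (fun i hi => by simp only [hsets, dif_pos hi]; exact hs _)]
  rw [← Finset.prod_coe_sort t (fun i => μ (f i ⁻¹' sets i))]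
  refine Finset.prod_congr rfl fun i _ => ?_
  rw [Measure.map_apply (hf _) (hs i)]
  congr 1
  simp only [hsets, dif_pos i.2]

lemma map_fun_eq_map_fun (μ : Measure Ω) [IsProbabilityMeasure μ]
    (μ' : Measure Ω') [IsProbabilityMeasure μ']
    (f : ι → Ω → ℝ) (f' : ι → Ω' → ℝ)
    (hf : ∀ i, Measurable (f i)) (hf' : ∀ i, Measurable (f' i))
    (hind : iIndepFun f μ)
    (hind' : iIndepFun f' μ')
    (hlaw : ∀ i, Measure.map (f i) μ = Measure.map (f' i) μ') :
    Measure.map (fun ω i => f i ω) μ = Measure.map (fun ω i => f' i ω) μ' := by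
  have hT : Measurable (fun ω (i : ι) => f i ω) := measurable_pi_lambda _ fun i => hf i
  have hT' : Measurable (fun ω (i : ι) => f' i ω) := measurable_pi_lambda _ fun i => hf' i
  haveI : IsProbabilityMeasure (Measure.map (fun ω (i : ι) => f i ω) μ) :=
    Measure.isProbabilityMeasure_map hT.aemeasurable
  haveI : IsProbabilityMeasure (Measure.map (fun ω (i : ι) => f' i ω) μ') :=
    Measure.isProbabilityMeasure_map hT'.aemeasurable
  refine ext_of_generate_finite (measurableCylinders (fun _ : ι => ℝ))
    generateFrom_measurableCylinders.symm isPiSystem_measurableCylinders ?_ (by simp)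
  intro s hs
  obtain ⟨t, S, hS, rfl⟩ := (mem_measurableCylinders s).mp hs
  rw [Measure.map_apply hT (hS.cylinder t), Measure.map_apply hT' (hS.cylinder t)]
  have h1 : (fun ω (i : ι) => f i ω) ⁻¹' cylinder t S
      = (fun ω => fun i : t => f (i : ι) ω) ⁻¹' S := rfl
  have h2 : (fun ω (i : ι) => f' i ω) ⁻¹' cylinder t S
      = (fun ω => fun i : t => f' (i : ι) ω) ⁻¹' S := rfl
  rw [h1, h2,
    ← Measure.map_apply (measurable_pi_lambda _ fun i => hf _) hS,
    ← Measure.map_apply (measurable_pi_lambda _ fun i => hf' _) hS,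
    map_restrict_eq_pi μ f hf hind t, map_restrict_eq_pi μ' f' hf' hind' t]
  have : (fun i : t => Measure.map (f (i : ι)) μ)
      = fun i : t => Measure.map (f' (i : ι)) μ' := funext fun i => hlaw i
  rw [this]

end Law

lemma phi_measurable' {k l : ℕ} (hk : k ≠ 0) (hl : l ≠ 0) : Measurable (phi k l) := by
  obtain ⟨k, rfl⟩ := Nat.exists_eq_succ_of_ne_zero hk
  obtain ⟨l, rfl⟩ := Nat.exists_eq_succ_of_ne_zero hl
  exact phi_measurable k l

lemma phi_le_self' {k l : ℕ} (hk : k ≠ 0) (hl : l ≠ 0) (hlk : l ≤ k) (x : ℝ) :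
    phi k l x ≤ x := by
  obtain ⟨k, rfl⟩ := Nat.exists_eq_succ_of_ne_zero hk
  obtain ⟨l, rfl⟩ := Nat.exists_eq_succ_of_ne_zero hl
  exact phi_le_self k l (Nat.succ_le_succ_iff.mp hlk) x

lemma self_le_phi' {k l : ℕ} (hk : k ≠ 0) (hl : l ≠ 0) (hkl : k ≤ l) (x : ℝ) :
    x ≤ phi k l x := by
  obtain ⟨k, rfl⟩ := Nat.exists_eq_succ_of_ne_zero hk
  obtain ⟨l, rfl⟩ := Nat.exists_eq_succ_of_ne_zero hl
  exact self_le_phi k l (Nat.succ_le_succ_iff.mp hkl) x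

lemma map_phi' {k l : ℕ} (hk : k ≠ 0) (hl : l ≠ 0) :
    Measure.map (phi k l) (gammaMeasure (k : ℝ) 1) = gammaMeasure (l : ℝ) 1 := by
  obtain ⟨k, rfl⟩ := Nat.exists_eq_succ_of_ne_zero hk
  obtain ⟨l, rfl⟩ := Nat.exists_eq_succ_of_ne_zero hl
  exact map_phi k l

end CovAux



namespace CovAux

/-- SIR as a function on the canonical space `ℕ ⊕ ℕ → ℝ`. -/
noncomputable def canonSIR (P : ℕ → ℝ) (x : ℕ → EuclideanSpace ℝ (Fin 2)) (α : ℝ) (n : ℕ)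
    (y : ℕ ⊕ ℕ → ℝ) : ℝ≥0∞ :=
  ENNReal.ofReal (P n * y (Sum.inl n) * ‖x n‖ ^ (-α)) /
    ∑' m : ℕ, if m = n then 0 else ENNReal.ofReal (P m * y (Sum.inr m) * ‖x m‖ ^ (-α))

lemma measurable_canonSIR (P : ℕ → ℝ) (x : ℕ → EuclideanSpace ℝ (Fin 2)) (α : ℝ) (n : ℕ) :
    Measurable (canonSIR P x α n) := by
  apply Measurable.div
  · exact (((measurable_pi_apply (X := fun _ : ℕ ⊕ ℕ => ℝ) (Sum.inl n)).const_mul (P n)).mul_const _).ennreal_ofReal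
  · apply Measurable.ennreal_tsum
    intro m
    by_cases hm : m = n
    · simp only [if_pos hm]; exact measurable_const
    · simp only [if_neg hm]
      exact (((measurable_pi_apply (X := fun _ : ℕ ⊕ ℕ => ℝ) (Sum.inr m)).const_mul (P m)).mul_const _).ennreal_ofReal

/-- Coverage event on the canonical space. -/
def covSet (P : ℕ → ℝ) (x : ℕ → EuclideanSpace ℝ (Fin 2)) (α : ℝ) (β : ℕ → ℝ) :
    Set (ℕ ⊕ ℕ → ℝ) :=
  {y | ∃ n : ℕ, ENNReal.ofReal (β n) < canonSIR P x α n y}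

lemma measurableSet_covSet (P : ℕ → ℝ) (x : ℕ → EuclideanSpace ℝ (Fin 2)) (α : ℝ)
    (β : ℕ → ℝ) : MeasurableSet (covSet P x α β) := by
  have : covSet P x α β = ⋃ n : ℕ, canonSIR P x α n ⁻¹' Ioi (ENNReal.ofReal (β n)) := by
    ext y; simp [covSet]
  rw [this]
  exact MeasurableSet.iUnion fun n => measurable_canonSIR P x α n measurableSet_Ioi

lemma SIR_eq_canon {Ω : Type*} (P : ℕ → ℝ) (x : ℕ → EuclideanSpace ℝ (Fin 2)) (α : ℝ)
    (h g : ℕ → Ω → ℝ) (n : ℕ) (ω : Ω) :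
    _root_.SIR P x α h g n ω = canonSIR P x α n (fun i => Sum.elim h g i ω) := rfl

lemma SIR_mono {Ω : Type*} (P : ℕ → ℝ) (x : ℕ → EuclideanSpace ℝ (Fin 2)) (α : ℝ)
    (hP : ∀ n, 0 ≤ P n) (h₁ h₂ g₁ g₂ : ℕ → Ω → ℝ)
    (hh : ∀ n ω, h₂ n ω ≤ h₁ n ω) (hg : ∀ n ω, g₁ n ω ≤ g₂ n ω) (n : ℕ) (ω : Ω) :
    _root_.SIR P x α h₂ g₂ n ω ≤ _root_.SIR P x α h₁ g₁ n ω := by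
  unfold _root_.SIR _root_.interference
  refine ENNReal.div_le_div ?_ ?_
  · exact ENNReal.ofReal_le_ofReal (mul_le_mul_of_nonneg_right
      (mul_le_mul_of_nonneg_left (hh n ω) (hP n)) (Real.rpow_nonneg (norm_nonneg _) _))
  · refine ENNReal.tsum_le_tsum fun m => ?_
    by_cases hm : m = n
    · simp [hm]
    · simp only [if_neg hm]
      exact ENNReal.ofReal_le_ofReal (mul_le_mul_of_nonneg_right
        (mul_le_mul_of_nonneg_left (hg m ω) (hP m)) (Real.rpow_nonneg (norm_nonneg _) _))

end CovAux



end CovAuxSection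

/-- SU-BF (each base station with `M n` antennas serves one user, so `Δ n = M n`, `Ψ n = 1`)
has coverage probability at least that of SDMA (each base station serves `Ψ' n` users with
`1 < Ψ' n ≤ M n`, so `Δ' n = M n - Ψ' n + 1`). -/
theorem coverage_SUBF_ge_SDMA
    (α : ℝ) (hα : 2 < α)
    (x : ℕ → EuclideanSpace ℝ (Fin 2)) (hx : ∀ n, x n ≠ 0)
    (P : ℕ → ℝ) (hP : ∀ n, 0 < P n)
    (β : ℕ → ℝ) (hβ : ∀ n, 0 < β n)
    (M : ℕ → ℕ) (hM : ∀ n, 2 ≤ M n)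
    (Ψ' : ℕ → ℕ) (hΨ'lb : ∀ n, 1 < Ψ' n) (hΨ'ub : ∀ n, Ψ' n ≤ M n)
    {Ω : Type*} [MeasurableSpace Ω] (μ : Measure Ω) [IsProbabilityMeasure μ]
    {Ω' : Type*} [MeasurableSpace Ω'] (μ' : Measure Ω') [IsProbabilityMeasure μ']
    (h g : ℕ → Ω → ℝ) (h' g' : ℕ → Ω' → ℝ)
    (hhm : ∀ n, Measurable (h n)) (hgm : ∀ n, Measurable (g n))
    (hh'm : ∀ n, Measurable (h' n)) (hg'm : ∀ n, Measurable (g' n))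
    (hindep : iIndepFun (Sum.elim h g) μ)
    (hindep' : iIndepFun (Sum.elim h' g') μ')
    (hhd : ∀ n, Measure.map (h n) μ = gammaMeasure (M n) 1)
    (hgd : ∀ n, Measure.map (g n) μ = gammaMeasure 1 1)
    (hh'd : ∀ n, Measure.map (h' n) μ' = gammaMeasure (M n - Ψ' n + 1) 1)
    (hg'd : ∀ n, Measure.map (g' n) μ' = gammaMeasure (Ψ' n) 1) :
    μ' {ω | ∃ n : ℕ, ENNReal.ofReal (β n) < SIR P x α h' g' n ω} ≤
      μ {ω | ∃ n : ℕ, ENNReal.ofReal (β n) < SIR P x α h g n ω} := by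
  classical
  open CovAux in
  -- shape arithmetic
  have hMne : ∀ n, M n ≠ 0 := fun n => by have := hM n; omega
  have hM'ne : ∀ n, M n - Ψ' n + 1 ≠ 0 := fun n => by omega
  have hΨne : ∀ n, Ψ' n ≠ 0 := fun n => by have := hΨ'lb n; omega
  have hcast : ∀ n, ((M n - Ψ' n + 1 : ℕ) : ℝ) = (M n : ℝ) - Ψ' n + 1 := fun n => by
    rw [Nat.cast_add, Nat.cast_sub (hΨ'ub n), Nat.cast_one]
  -- coupled random variables on Ω
  set h'' : ℕ → Ω → ℝ := fun n ω => CovAux.phi (M n) (M n - Ψ' n + 1) (h n ω) with hh''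
  set g'' : ℕ → Ω → ℝ := fun n ω => CovAux.phi 1 (Ψ' n) (g n ω) with hg''
  have hφhm : ∀ n, Measurable (CovAux.phi (M n) (M n - Ψ' n + 1)) :=
    fun n => CovAux.phi_measurable' (hMne n) (hM'ne n)
  have hφgm : ∀ n, Measurable (CovAux.phi 1 (Ψ' n)) :=
    fun n => CovAux.phi_measurable' one_ne_zero (hΨne n)
  have hh''m : ∀ n, Measurable (h'' n) := fun n => (hφhm n).comp (hhm n)
  have hg''m : ∀ n, Measurable (g'' n) := fun n => (hφgm n).comp (hgm n)
  -- pointwise comparison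
  have hh''le : ∀ n ω, h'' n ω ≤ h n ω := fun n ω =>
    CovAux.phi_le_self' (hMne n) (hM'ne n) (by have := hΨ'lb n; have := hM n; omega) (h n ω)
  have hg''ge : ∀ n ω, g n ω ≤ g'' n ω := fun n ω =>
    CovAux.self_le_phi' one_ne_zero (hΨne n) (hΨ'lb n).le (g n ω)
  -- laws
  have hh''d : ∀ n, Measure.map (h'' n) μ
      = gammaMeasure ((M n : ℝ) - Ψ' n + 1) 1 := by
    intro n
    have heq : h'' n = CovAux.phi (M n) (M n - Ψ' n + 1) ∘ h n := rfl
    rw [heq, ← Measure.map_map (hφhm n) (hhm n), hhd n,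
      CovAux.map_phi' (hMne n) (hM'ne n), hcast n]
  have hg''d : ∀ n, Measure.map (g'' n) μ = gammaMeasure (Ψ' n) 1 := by
    intro n
    have : g'' n = CovAux.phi 1 (Ψ' n) ∘ g n := rfl
    rw [this, ← Measure.map_map (hφgm n) (hgm n), hgd n]
    have := CovAux.map_phi' (k := 1) (l := Ψ' n) one_ne_zero (hΨne n)
    simpa using this
  -- independence of the coupled family
  have hcomp : Sum.elim h'' g'' = fun i : ℕ ⊕ ℕ =>
      (Sum.elim (fun n => CovAux.phi (M n) (M n - Ψ' n + 1))
        (fun n => CovAux.phi 1 (Ψ' n)) i) ∘ (Sum.elim h g i) := by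
    funext i; cases i <;> rfl
  have hindep'' : iIndepFun (Sum.elim h'' g'') μ := by
    rw [hcomp]
    exact hindep.comp _ (fun i => by cases i with
      | inl n => exact hφhm n
      | inr n => exact hφgm n)
  -- measurability of elim families
  have hm' : ∀ i : ℕ ⊕ ℕ, Measurable (Sum.elim h' g' i) := fun i => by
    cases i with
    | inl n => exact hh'm n
    | inr n => exact hg'm n
  have hm'' : ∀ i : ℕ ⊕ ℕ, Measurable (Sum.elim h'' g'' i) := fun i => by
    cases i with
    | inl n => exact hh''m n
    | inr n => exact hg''m n
  -- equal joint laws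
  have hlaw : ∀ i : ℕ ⊕ ℕ,
      Measure.map (Sum.elim h' g' i) μ' = Measure.map (Sum.elim h'' g'' i) μ := fun i => by
    cases i with
    | inl n => rw [Sum.elim_inl, Sum.elim_inl, hh'd n, hh''d n]
    | inr n => rw [Sum.elim_inr, Sum.elim_inr, hg'd n, hg''d n]
  have key : Measure.map (fun ω i => Sum.elim h' g' i ω) μ'
      = Measure.map (fun ω i => Sum.elim h'' g'' i ω) μ :=
    CovAux.map_fun_eq_map_fun μ' μ _ _ hm' hm'' hindep' hindep'' hlaw
  -- rewrite events through the canonical space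
  have hT' : Measurable (fun ω (i : ℕ ⊕ ℕ) => Sum.elim h' g' i ω) :=
    measurable_pi_lambda _ hm'
  have hT'' : Measurable (fun ω (i : ℕ ⊕ ℕ) => Sum.elim h'' g'' i ω) :=
    measurable_pi_lambda _ hm''
  have hS := CovAux.measurableSet_covSet P x α β
  have e1 : {ω : Ω' | ∃ n : ℕ, ENNReal.ofReal (β n) < SIR P x α h' g' n ω}
      = (fun ω (i : ℕ ⊕ ℕ) => Sum.elim h' g' i ω) ⁻¹' CovAux.covSet P x α β := rfl
  have e2 : {ω : Ω | ∃ n : ℕ, ENNReal.ofReal (β n) < SIR P x α h'' g'' n ω}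
      = (fun ω (i : ℕ ⊕ ℕ) => Sum.elim h'' g'' i ω) ⁻¹' CovAux.covSet P x α β := rfl
  calc μ' {ω : Ω' | ∃ n : ℕ, ENNReal.ofReal (β n) < SIR P x α h' g' n ω}
      = Measure.map (fun ω (i : ℕ ⊕ ℕ) => Sum.elim h' g' i ω) μ'
          (CovAux.covSet P x α β) := by rw [Measure.map_apply hT' hS, e1]
    _ = Measure.map (fun ω (i : ℕ ⊕ ℕ) => Sum.elim h'' g'' i ω) μ
          (CovAux.covSet P x α β) := by rw [key]
    _ = μ {ω : Ω | ∃ n : ℕ, ENNReal.ofReal (β n) < SIR P x α h'' g'' n ω} := by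
          rw [Measure.map_apply hT'' hS, e2]
    _ ≤ μ {ω : Ω | ∃ n : ℕ, ENNReal.ofReal (β n) < SIR P x α h g n ω} := by
          refine measure_mono fun ω hω => ?_
          obtain ⟨n, hn⟩ := hω
          exact ⟨n, lt_of_lt_of_le hn (CovAux.SIR_mono P x α (fun m => (hP m).le)
            h h'' g g'' hh''le hg''ge n ω)⟩
end

section
/- Consider three coverage setups using the same locations x_n, powers P_n and SIR targets β_n, with antenna numbers M_n ≥ 2: (i) SU-BF, with Δ_n = M_n and Ψ_n = 1 for all n; (ii) SISO, with Δ'_n = 1 and Ψ'_n = 1 for all n; (iii) full SDMA, with Δ''_n = 1 and Ψ''_n = M_n for all n. Then the coverage probabilities satisfy P_c(Δ, Ψ) ≥ P_c(Δ', Ψ') ≥ P_c(Δ'', Ψ''). -/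
open MeasureTheory ProbabilityTheory ENNReal

namespace CoverageAux

open Real Set Filter Topology

/-- survival-type function: `exp (-x) * ∑_{j<k} x^j/j!`, equal to `1 - CDF` of `Gamma(k,1)`
on nonneg reals. -/
noncomputable def Ew (k : ℕ) (x : ℝ) : ℝ :=
  Real.exp (-x) * ∑ j ∈ Finset.range k, x ^ j / j.factorial

lemma continuous_Ew (k : ℕ) : Continuous (Ew k) := by
  unfold Ew
  fun_prop

lemma Ew_zero {k : ℕ} (hk : 1 ≤ k) : Ew k 0 = 1 := by
  unfold Ew
  rw [Finset.sum_eq_single 0]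
  · simp
  · intro j _ hj
    simp [zero_pow hj]
  · intro h
    exact absurd (Finset.mem_range.mpr hk) h

lemma hasDerivAt_Ew {k : ℕ} (hk : 1 ≤ k) (x : ℝ) :
    HasDerivAt (Ew k) (-(Real.exp (-x) * x ^ (k - 1) / (k - 1).factorial)) x := by
  induction k, hk using Nat.le_induction with
  | base =>
      have h1 : HasDerivAt (fun x : ℝ => Real.exp (-x)) (-Real.exp (-x)) x := by
        simpa using (hasDerivAt_neg x).exp
      have : Ew 1 = fun x : ℝ => Real.exp (-x) := by
        funext y; simp [Ew]
      rw [this]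
      simpa using h1
  | succ k hk ih =>
      have hEw : Ew (k + 1) = fun x => Ew k x + Real.exp (-x) * (x ^ k / k.factorial) := by
        funext y
        simp only [Ew, Finset.sum_range_succ, mul_add]
      have hexp : HasDerivAt (fun x : ℝ => Real.exp (-x)) (-Real.exp (-x)) x := by
        simpa using (hasDerivAt_neg x).exp
      have hpow : HasDerivAt (fun x : ℝ => x ^ k / (k.factorial : ℝ))
          ((k * x ^ (k - 1)) / k.factorial) x := (hasDerivAt_pow k x).div_const _
      have hmul := hexp.mul hpow
      have hsum := ih.add hmul
      rw [hEw]
      refine hsum.congr_deriv ?_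
      have hkfac : (k.factorial : ℝ) * k = (k.factorial : ℝ) * k := rfl
      have hfac : ((k + 1 - 1).factorial : ℝ) = k.factorial := by norm_num
      have hfacs : (k.factorial : ℝ) = k * (k - 1).factorial := by
        rw [← Nat.cast_mul, ← Nat.succ_pred_eq_of_pos hk]
        simp [Nat.factorial_succ, Nat.succ_pred_eq_of_pos hk]
      have hxpow : x ^ k = x * x ^ (k - 1) := by
        conv_lhs => rw [← Nat.succ_pred_eq_of_pos hk]
        rw [pow_succ, Nat.sub_one]
        ring
      have hk0 : (k : ℝ) ≠ 0 := Nat.cast_ne_zero.mpr (by omega)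
      have hf0 : ((k - 1).factorial : ℝ) ≠ 0 := Nat.cast_ne_zero.mpr (Nat.factorial_ne_zero _)
      rw [hfac, hfacs]
      field_simp
      rw [hxpow]
      obtain ⟨j, rfl⟩ : ∃ j, k = j + 1 := ⟨k - 1, by omega⟩
      simp only [Nat.add_sub_cancel] at *
      ring

lemma one_le_sum {k : ℕ} (hk : 1 ≤ k) {x : ℝ} (hx : 0 ≤ x) :
    1 ≤ ∑ j ∈ Finset.range k, x ^ j / j.factorial := by
  have h0 : (x : ℝ) ^ 0 / (Nat.factorial 0 : ℝ) = 1 := by simp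
  calc (1:ℝ) = x ^ 0 / (Nat.factorial 0 : ℝ) := h0.symm
    _ ≤ ∑ j ∈ Finset.range k, x ^ j / j.factorial := by
        exact Finset.single_le_sum (f := fun j => x ^ j / (j.factorial : ℝ))
          (fun j _ => by positivity) (Finset.mem_range.mpr hk)

lemma Ew_pos {k : ℕ} (hk : 1 ≤ k) {x : ℝ} (hx : 0 ≤ x) : 0 < Ew k x := by
  unfold Ew
  have := one_le_sum hk hx
  positivity

lemma exp_neg_le_Ew {k : ℕ} (hk : 1 ≤ k) {x : ℝ} (hx : 0 ≤ x) : Real.exp (-x) ≤ Ew k x := by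
  unfold Ew
  nth_rewrite 1 [← mul_one (Real.exp (-x))]
  exact mul_le_mul_of_nonneg_left (one_le_sum hk hx) (Real.exp_pos _).le

lemma Ew_le_one {k : ℕ} {x : ℝ} (hx : 0 ≤ x) : Ew k x ≤ 1 := by
  unfold Ew
  calc Real.exp (-x) * ∑ j ∈ Finset.range k, x ^ j / j.factorial
      ≤ Real.exp (-x) * Real.exp x :=
        mul_le_mul_of_nonneg_left (Real.sum_le_exp_of_nonneg hx k) (Real.exp_pos _).le
    _ = 1 := by rw [← Real.exp_add]; simp

lemma tendsto_Ew (k : ℕ) : Tendsto (Ew k) atTop (nhds 0) := by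
  have hEq : Ew k = fun x => ∑ j ∈ Finset.range k, (x ^ j * Real.exp (-x)) / j.factorial := by
    funext x
    rw [Ew, Finset.mul_sum]
    congr 1 with j
    ring
  rw [hEq]
  have : Tendsto (fun x : ℝ => ∑ j ∈ Finset.range k, (x ^ j * Real.exp (-x)) / j.factorial)
      atTop (nhds (∑ j ∈ Finset.range k, (0:ℝ) / j.factorial)) := by
    apply tendsto_finset_sum
    intro j _
    exact (Real.tendsto_pow_mul_exp_neg_atTop_nhds_zero j).div_const _
  simpa using this

lemma strictAntiOn_Ew {k : ℕ} (hk : 1 ≤ k) : StrictAntiOn (Ew k) (Ici 0) := by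
  apply strictAntiOn_of_deriv_neg (convex_Ici 0) (continuous_Ew k).continuousOn
  intro x hx
  rw [interior_Ici] at hx
  rw [(hasDerivAt_Ew hk x).deriv]
  have : 0 < Real.exp (-x) * x ^ (k - 1) / (k - 1).factorial := by
    have : (0:ℝ) < x ^ (k - 1) := pow_pos hx _
    positivity
  linarith


lemma gamma_Iio_zero {k : ℕ} : gammaMeasure (k : ℝ) 1 (Iio 0) = 0 := by
  rw [gammaMeasure, withDensity_apply _ measurableSet_Iio]
  exact lintegral_gammaPDF_of_nonpos le_rfl

lemma gamma_Iic_neg {k : ℕ} {t : ℝ} (ht : t < 0) : gammaMeasure (k : ℝ) 1 (Iic t) = 0 := by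
  refine le_antisymm ?_ zero_le
  rw [← gamma_Iio_zero (k := k)]
  exact measure_mono (Iic_subset_Iio.mpr ht)

lemma gammaPDF_eq_G {k : ℕ} (hk : 1 ≤ k) {y : ℝ} (hy : 0 ≤ y) :
    gammaPDF (k : ℝ) 1 y = ENNReal.ofReal (Real.exp (-y) * y ^ (k - 1) / (k - 1).factorial) := by
  rw [gammaPDF_of_nonneg hy]
  congr 1
  have hcast : ((k : ℝ) : ℝ) = ((k - 1 : ℕ) : ℝ) + 1 := by
    push_cast [Nat.cast_sub hk]
    ring
  have hG : Real.Gamma (k : ℝ) = (k - 1).factorial := by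
    rw [hcast, Real.Gamma_nat_eq_factorial]
  have hpow : y ^ ((k : ℝ) - 1) = y ^ (k - 1 : ℕ) := by
    have : (k : ℝ) - 1 = ((k - 1 : ℕ) : ℝ) := by
      rw [Nat.cast_sub hk]; norm_num
    rw [this, Real.rpow_natCast]
  rw [Real.one_rpow, hG, hpow]
  ring_nf

lemma gamma_Iic_nonneg {k : ℕ} (hk : 1 ≤ k) {t : ℝ} (ht : 0 ≤ t) :
    gammaMeasure (k : ℝ) 1 (Iic t) = ENNReal.ofReal (1 - Ew k t) := by
  set G : ℝ → ℝ := fun y => Real.exp (-y) * y ^ (k - 1) / (k - 1).factorial with hGdef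
  have hGcont : Continuous G := by fun_prop
  have hGnn : 0 ≤ᵐ[MeasureTheory.volume.restrict (Icc (0:ℝ) t)] G := by
    refine (ae_restrict_iff' measurableSet_Icc).mpr (ae_of_all _ fun y hy => ?_)
    have hy0 : (0:ℝ) ≤ y := hy.1
    have : (0:ℝ) ≤ y ^ (k-1) := by positivity
    positivity
  rw [gammaMeasure, withDensity_apply _ measurableSet_Iic,
    lintegral_Iic_eq_lintegral_Iio_add_Icc _ ht, lintegral_gammaPDF_of_nonpos le_rfl, zero_add]
  have h1 : ∫⁻ y in Icc 0 t, gammaPDF (k : ℝ) 1 y = ∫⁻ y in Icc 0 t, ENNReal.ofReal (G y) := by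
    refine setLIntegral_congr_fun measurableSet_Icc (fun y hy => ?_)
    exact gammaPDF_eq_G hk hy.1
  rw [h1]
  have hInt : IntegrableOn G (Icc 0 t) := hGcont.continuousOn.integrableOn_Icc
  rw [← ofReal_integral_eq_lintegral_ofReal hInt hGnn]
  congr 1
  have h2 : ∫ y in Icc 0 t, G y = ∫ y in (0:ℝ)..t, G y := by
    rw [MeasureTheory.integral_Icc_eq_integral_Ioc, intervalIntegral.integral_of_le ht]
  have h3 : ∫ y in (0:ℝ)..t, G y = (fun y => -Ew k y) t - (fun y => -Ew k y) 0 := by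
    apply intervalIntegral.integral_eq_sub_of_hasDerivAt
    · intro y _
      exact (hasDerivAt_Ew hk y).neg.congr_deriv (neg_neg _)
    · exact hGcont.intervalIntegrable _ _
  rw [h2, h3]
  show -Ew k t - -Ew k 0 = 1 - Ew k t
  rw [Ew_zero hk]
  ring

/-- The coupling map: measurable, `phi k x ≤ x`, and it pushes `Gamma(k,1)` to `Gamma(1,1)`. -/
noncomputable def phi (k : ℕ) (x : ℝ) : ℝ := min x (-Real.log (Ew k x))

lemma phi_le (k : ℕ) (x : ℝ) : phi k x ≤ x := min_le_left _ _

lemma measurable_phi (k : ℕ) : Measurable (phi k) :=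
  measurable_id.min ((Real.measurable_log.comp (continuous_Ew k).measurable)).neg

lemma neg_log_Ew_nonneg {k : ℕ} (hk : 1 ≤ k) {x : ℝ} (hx : 0 ≤ x) :
    0 ≤ -Real.log (Ew k x) := by
  have := Real.log_nonpos (Ew_pos hk hx).le (Ew_le_one hx)
  linarith

lemma neg_log_Ew_le {k : ℕ} (hk : 1 ≤ k) {x : ℝ} (hx : 0 ≤ x) :
    -Real.log (Ew k x) ≤ x := by
  have h := (Real.le_log_iff_exp_le (Ew_pos hk hx)).mpr (exp_neg_le_Ew hk hx)
  linarith

lemma phi_eq {k : ℕ} (hk : 1 ≤ k) {x : ℝ} (hx : 0 ≤ x) :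
    phi k x = -Real.log (Ew k x) :=
  min_eq_right (neg_log_Ew_le hk hx)

lemma map_phi {k : ℕ} (hk : 1 ≤ k) :
    Measure.map (phi k) (gammaMeasure (k : ℝ) 1) = gammaMeasure (1 : ℝ) 1 := by
  have hkpos : (0:ℝ) < (k : ℝ) := by exact_mod_cast hk
  haveI : IsProbabilityMeasure (gammaMeasure (k : ℝ) 1) :=
    isProbabilityMeasure_gammaMeasure hkpos one_pos
  haveI : IsProbabilityMeasure (Measure.map (phi k) (gammaMeasure (k : ℝ) 1)) :=
    Measure.isProbabilityMeasure_map (measurable_phi k).aemeasurable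
  apply Measure.ext_of_Iic
  intro t
  rw [Measure.map_apply (measurable_phi k) measurableSet_Iic]
  have hEw1 : ∀ s : ℝ, Ew 1 s = Real.exp (-s) := by
    intro s; simp [Ew]
  rcases le_or_gt 0 t with ht | ht
  · -- find s with Ew k s = exp (-t)
    have h0 : (0:ℝ) < Real.exp (-t) := Real.exp_pos _
    obtain ⟨x0, hx0⟩ := ((tendsto_Ew k).eventually_lt_const h0).and (eventually_ge_atTop 0)
      |>.exists
    obtain ⟨hx0lt, hx0nn⟩ := hx0
    have hmem : Real.exp (-t) ∈ Icc (Ew k x0) (Ew k 0) := by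
      constructor
      · exact hx0lt.le
      · rw [Ew_zero hk]
        exact Real.exp_le_one_iff.mpr (by linarith)
    obtain ⟨s, hs, hEs⟩ := intermediate_value_Icc' hx0nn (continuous_Ew k).continuousOn hmem
    have hs0 : 0 ≤ s := hs.1
    have hset : phi k ⁻¹' Iic t ∩ Ici 0 = Icc 0 s := by
      ext y
      simp only [mem_inter_iff, mem_preimage, mem_Iic, mem_Ici, mem_Icc]
      constructor
      · rintro ⟨hyt, hy0⟩
        refine ⟨hy0, ?_⟩
        rw [phi_eq hk hy0] at hyt
        have h1 : -t ≤ Real.log (Ew k y) := by linarith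
        have h2 : Real.exp (-t) ≤ Ew k y := (Real.le_log_iff_exp_le (Ew_pos hk hy0)).mp h1
        rw [← hEs] at h2
        exact ((strictAntiOn_Ew hk).le_iff_ge hs0 hy0).mp h2
      · rintro ⟨hy0, hys⟩
        refine ⟨?_, hy0⟩
        rw [phi_eq hk hy0]
        have h2 : Ew k s ≤ Ew k y := ((strictAntiOn_Ew hk).le_iff_ge hs0 hy0).mpr hys
        rw [hEs] at h2
        have h1 : -t ≤ Real.log (Ew k y) := (Real.le_log_iff_exp_le (Ew_pos hk hy0)).mpr h2
        linarith
    have hmeas : gammaMeasure (k : ℝ) 1 (phi k ⁻¹' Iic t)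
        = gammaMeasure (k : ℝ) 1 (phi k ⁻¹' Iic t ∩ Ici 0) := by
      have hd : phi k ⁻¹' Iic t ∩ Ici 0 = phi k ⁻¹' Iic t \ Iio 0 := by
        rw [diff_eq, compl_Iio]
      rw [hd, measure_diff_null gamma_Iio_zero]
    have hIcc : gammaMeasure (k : ℝ) 1 (Icc 0 s) = gammaMeasure (k : ℝ) 1 (Iic s) := by
      rw [← Iio_union_Icc_eq_Iic hs0, measure_union _ measurableSet_Icc, gamma_Iio_zero,
        zero_add]
      rw [Set.disjoint_left]
      rintro y (hy : y < 0) ⟨hy0, -⟩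
      linarith
    have hg1 : gammaMeasure (1:ℝ) 1 (Iic t) = ENNReal.ofReal (1 - Real.exp (-t)) := by
      have h := gamma_Iic_nonneg (k := 1) le_rfl ht
      rw [hEw1] at h
      simpa using h
    rw [hmeas, hset, hIcc, gamma_Iic_nonneg hk hs0, hEs, hg1]
  · -- t < 0
    have hsub : phi k ⁻¹' Iic t ⊆ Iio 0 := by
      intro y hy
      simp only [mem_preimage, mem_Iic] at hy
      by_contra hy0
      rw [mem_Iio, not_lt] at hy0
      have h1 : 0 ≤ phi k y := le_min hy0 (neg_log_Ew_nonneg hk hy0)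
      linarith
    have : gammaMeasure (k : ℝ) 1 (phi k ⁻¹' Iic t) = 0 :=
      le_antisymm (le_trans (measure_mono hsub) gamma_Iio_zero.le) zero_le
    rw [this]
    have h := gamma_Iic_neg (k := 1) ht
    simp only [Nat.cast_one] at h
    rw [h]


section JointLaw

variable {ι : Type*} {Ω : Type*} [MeasurableSpace Ω] {Ω' : Type*} [MeasurableSpace Ω']

lemma finite_joint (μ : Measure Ω) [IsProbabilityMeasure μ] (f : ι → Ω → ℝ)
    (hmeas : ∀ i, Measurable (f i))
    (hind : iIndepFun f μ)
    (s : Finset ι) :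
    Measure.map (fun ω (i : s) => f i ω) μ
      = Measure.pi (fun i : s => Measure.map (f i) μ) := by
  classical
  haveI : ∀ i : s, IsProbabilityMeasure (Measure.map (f (i : ι)) μ) :=
    fun i => Measure.isProbabilityMeasure_map (hmeas i).aemeasurable
  haveI : ∀ i : s, SigmaFinite (Measure.map (f (i : ι)) μ) := fun i => inferInstance
  symm
  apply Measure.pi_eq
  intro A hA
  have hgm : Measurable (fun ω => fun i : s => f (i : ι) ω) :=
    measurable_pi_lambda _ fun i => hmeas i
  rw [Measure.map_apply hgm (MeasurableSet.univ_pi hA)]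
  set sets : ι → Set ℝ := fun i => if h : i ∈ s then A ⟨i, h⟩ else Set.univ with hsets
  have hpre : (fun ω (i : s) => f i ω) ⁻¹' (Set.univ.pi A) = ⋂ i ∈ s, f i ⁻¹' sets i := by
    ext ω
    simp only [Set.mem_preimage, Set.mem_pi, Set.mem_univ, forall_true_left, Set.mem_iInter,
      hsets]
    constructor
    · intro hω i hi
      simp only [dif_pos hi, Set.mem_preimage]
      exact hω ⟨i, hi⟩
    · intro hω i
      have := hω i i.2
      simpa only [dif_pos i.2, Set.mem_preimage] using this
  have hsm : ∀ i ∈ s, MeasurableSet (sets i) := by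
    intro i hi
    simp only [hsets, dif_pos hi]
    exact hA ⟨i, hi⟩
  rw [hpre, hind.measure_inter_preimage_eq_mul s hsm]
  rw [← Finset.prod_coe_sort s (fun i => μ (f i ⁻¹' sets i))]
  apply Finset.prod_congr rfl
  intro i _
  rw [Measure.map_apply (hmeas i) (hA i)]
  congr 1
  simp only [hsets, dif_pos i.2]

lemma joint_eq (μ : Measure Ω) [IsProbabilityMeasure μ] (ν : Measure Ω')
    [IsProbabilityMeasure ν] (f : ι → Ω → ℝ) (f' : ι → Ω' → ℝ)
    (hmeas : ∀ i, Measurable (f i)) (hmeas' : ∀ i, Measurable (f' i))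
    (hind : iIndepFun f μ)
    (hind' : iIndepFun f' ν)
    (hmarg : ∀ i, Measure.map (f i) μ = Measure.map (f' i) ν) :
    Measure.map (fun ω i => f i ω) μ = Measure.map (fun ω i => f' i ω) ν := by
  have hFm : Measurable (fun ω (i : ι) => f i ω) := measurable_pi_lambda _ fun i => hmeas i
  have hF'm : Measurable (fun ω (i : ι) => f' i ω) := measurable_pi_lambda _ fun i => hmeas' i
  haveI : IsProbabilityMeasure (Measure.map (fun ω (i : ι) => f i ω) μ) :=
    Measure.isProbabilityMeasure_map hFm.aemeasurable
  haveI : IsProbabilityMeasure (Measure.map (fun ω (i : ι) => f' i ω) ν) :=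
    Measure.isProbabilityMeasure_map hF'm.aemeasurable
  refine ext_of_generate_finite _ generateFrom_measurableCylinders.symm
    isPiSystem_measurableCylinders ?_ (by simp)
  intro T hT
  obtain ⟨s, S, hS, rfl⟩ := (mem_measurableCylinders T).mp hT
  have hcylm : MeasurableSet (cylinder s S (α := fun _ : ι => ℝ)) := hS.cylinder
  rw [Measure.map_apply hFm hcylm, Measure.map_apply hF'm hcylm]
  have h1 : (fun ω (i : ι) => f i ω) ⁻¹' cylinder s S
      = (fun ω (i : s) => f i ω) ⁻¹' S := rfl
  have h2 : (fun ω (i : ι) => f' i ω) ⁻¹' cylinder s S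
      = (fun ω (i : s) => f' i ω) ⁻¹' S := rfl
  have hgm : Measurable (fun ω => fun i : s => f (i : ι) ω) :=
    measurable_pi_lambda _ fun i => hmeas i
  have hgm' : Measurable (fun ω => fun i : s => f' (i : ι) ω) :=
    measurable_pi_lambda _ fun i => hmeas' i
  rw [h1, h2, ← Measure.map_apply hgm hS, ← Measure.map_apply hgm' hS,
    finite_joint μ f hmeas hind s, finite_joint ν f' hmeas' hind' s]
  have hm : (fun i : s => Measure.map (f (i : ι)) μ)
      = fun i : s => Measure.map (f' (i : ι)) ν := funext fun i => hmarg i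
  rw [hm]

end JointLaw


section Event

variable (P : ℕ → ℝ) (x : ℕ → EuclideanSpace ℝ (Fin 2)) (α : ℝ) (β : ℕ → ℝ)

/-- The coverage event, as a set of configurations `(ℕ ⊕ ℕ) → ℝ`
(the `inl` coordinates are signal fadings, `inr` coordinates interference fadings). -/
def bigS : Set ((ℕ ⊕ ℕ) → ℝ) :=
  {f | ∃ n : ℕ, ENNReal.ofReal (β n) <
    ENNReal.ofReal (P n * f (Sum.inl n) * ‖x n‖ ^ (-α)) /
      ∑' m : ℕ, if m = n then 0 else ENNReal.ofReal (P m * f (Sum.inr m) * ‖x m‖ ^ (-α))}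

lemma measurableSet_bigS : MeasurableSet (bigS P x α β) := by
  rw [bigS, Set.setOf_exists]
  apply MeasurableSet.iUnion
  intro n
  apply measurableSet_lt measurable_const
  apply Measurable.div
  · exact Measurable.ennreal_ofReal (by fun_prop)
  · apply Measurable.ennreal_tsum
    intro m
    by_cases hm : m = n
    · simp [hm]
    · simp only [hm, if_false]
      exact Measurable.ennreal_ofReal (by fun_prop)

variable {Ω : Type*} [MeasurableSpace Ω]

lemma event_eq (h g : ℕ → Ω → ℝ) :
    {ω | ∃ n : ℕ, ENNReal.ofReal (β n) < SIR P x α h g n ω}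
      = (fun ω (i : ℕ ⊕ ℕ) => Sum.elim h g i ω) ⁻¹' bigS P x α β := rfl

lemma measurable_joint {h g : ℕ → Ω → ℝ} (hhm : ∀ n, Measurable (h n))
    (hgm : ∀ n, Measurable (g n)) :
    Measurable (fun ω (i : ℕ ⊕ ℕ) => Sum.elim h g i ω) := by
  apply measurable_pi_lambda
  intro i
  cases i with
  | inl n => exact hhm n
  | inr n => exact hgm n

lemma measure_event_eq (μ : Measure Ω) {h g : ℕ → Ω → ℝ} (hhm : ∀ n, Measurable (h n))
    (hgm : ∀ n, Measurable (g n)) :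
    μ {ω | ∃ n : ℕ, ENNReal.ofReal (β n) < SIR P x α h g n ω}
      = (Measure.map (fun ω (i : ℕ ⊕ ℕ) => Sum.elim h g i ω) μ) (bigS P x α β) := by
  rw [Measure.map_apply (measurable_joint hhm hgm) (measurableSet_bigS P x α β), ← event_eq]

lemma event_subset_of_le_h (hP : ∀ n, 0 ≤ P n) {h₁ h₂ g : ℕ → Ω → ℝ}
    (hle : ∀ n ω, h₁ n ω ≤ h₂ n ω) :
    {ω | ∃ n : ℕ, ENNReal.ofReal (β n) < SIR P x α h₁ g n ω}
      ⊆ {ω | ∃ n : ℕ, ENNReal.ofReal (β n) < SIR P x α h₂ g n ω} := by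
  rintro ω ⟨n, hn⟩
  refine ⟨n, lt_of_lt_of_le hn ?_⟩
  unfold SIR
  apply ENNReal.div_le_div_right
  apply ENNReal.ofReal_le_ofReal
  exact mul_le_mul_of_nonneg_right
    (mul_le_mul_of_nonneg_left (hle n ω) (hP n))
    (Real.rpow_nonneg (norm_nonneg _) _)

lemma event_subset_of_le_g (hP : ∀ n, 0 ≤ P n) {h g₁ g₂ : ℕ → Ω → ℝ}
    (hle : ∀ n ω, g₂ n ω ≤ g₁ n ω) :
    {ω | ∃ n : ℕ, ENNReal.ofReal (β n) < SIR P x α h g₁ n ω}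
      ⊆ {ω | ∃ n : ℕ, ENNReal.ofReal (β n) < SIR P x α h g₂ n ω} := by
  rintro ω ⟨n, hn⟩
  refine ⟨n, lt_of_lt_of_le hn ?_⟩
  unfold SIR
  apply ENNReal.div_le_div_left
  unfold interference
  apply ENNReal.tsum_le_tsum
  intro m
  by_cases hm : m = n
  · simp [hm]
  · simp only [hm, if_false]
    apply ENNReal.ofReal_le_ofReal
    exact mul_le_mul_of_nonneg_right
      (mul_le_mul_of_nonneg_left (hle m ω) (hP m))
      (Real.rpow_nonneg (norm_nonneg _) _)

end Event

end CoverageAux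

/-- The coverage probability of SU-BF (`Δ n = M n`, `Ψ n = 1`) is at least that of SISO
(`Δ' n = 1`, `Ψ' n = 1`), which is in turn at least that of full SDMA
(`Δ'' n = 1`, `Ψ'' n = M n`). -/
theorem coverage_SUBF_ge_SISO_ge_fullSDMA
    (α : ℝ) (hα : 2 < α)
    (x : ℕ → EuclideanSpace ℝ (Fin 2)) (hx : ∀ n, x n ≠ 0)
    (P : ℕ → ℝ) (hP : ∀ n, 0 < P n)
    (β : ℕ → ℝ) (hβ : ∀ n, 0 < β n)
    (M : ℕ → ℕ) (hM : ∀ n, 2 ≤ M n)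
    {Ω : Type*} [MeasurableSpace Ω] (μ : Measure Ω) [IsProbabilityMeasure μ]
    {Ω' : Type*} [MeasurableSpace Ω'] (μ' : Measure Ω') [IsProbabilityMeasure μ']
    {Ω'' : Type*} [MeasurableSpace Ω''] (μ'' : Measure Ω'') [IsProbabilityMeasure μ'']
    (h g : ℕ → Ω → ℝ) (h' g' : ℕ → Ω' → ℝ) (h'' g'' : ℕ → Ω'' → ℝ)
    (hhm : ∀ n, Measurable (h n)) (hgm : ∀ n, Measurable (g n))
    (hh'm : ∀ n, Measurable (h' n)) (hg'm : ∀ n, Measurable (g' n))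
    (hh''m : ∀ n, Measurable (h'' n)) (hg''m : ∀ n, Measurable (g'' n))
    (hindep : iIndepFun
      (Sum.elim h g) μ)
    (hindep' : iIndepFun
      (Sum.elim h' g') μ')
    (hindep'' : iIndepFun
      (Sum.elim h'' g'') μ'')
    (hhd : ∀ n, Measure.map (h n) μ = gammaMeasure (M n) 1)
    (hgd : ∀ n, Measure.map (g n) μ = gammaMeasure 1 1)
    (hh'd : ∀ n, Measure.map (h' n) μ' = gammaMeasure 1 1)
    (hg'd : ∀ n, Measure.map (g' n) μ' = gammaMeasure 1 1)
    (hh''d : ∀ n, Measure.map (h'' n) μ'' = gammaMeasure 1 1)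
    (hg''d : ∀ n, Measure.map (g'' n) μ'' = gammaMeasure (M n) 1) :
    μ'' {ω | ∃ n : ℕ, ENNReal.ofReal (β n) < SIR P x α h'' g'' n ω} ≤
      μ' {ω | ∃ n : ℕ, ENNReal.ofReal (β n) < SIR P x α h' g' n ω} ∧
    μ' {ω | ∃ n : ℕ, ENNReal.ofReal (β n) < SIR P x α h' g' n ω} ≤
      μ {ω | ∃ n : ℕ, ENNReal.ofReal (β n) < SIR P x α h g n ω} := by
  classical
  have hP0 : ∀ n, 0 ≤ P n := fun n => (hP n).le
  -- the coupled families
  set h2 : ℕ → Ω → ℝ := fun n ω => CoverageAux.phi (M n) (h n ω) with hh2def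
  set g2 : ℕ → Ω'' → ℝ := fun n ω => CoverageAux.phi (M n) (g'' n ω) with hg2def
  have hh2m : ∀ n, Measurable (h2 n) := fun n => (CoverageAux.measurable_phi _).comp (hhm n)
  have hg2m : ∀ n, Measurable (g2 n) := fun n => (CoverageAux.measurable_phi _).comp (hg''m n)
  have hMn : ∀ n, 1 ≤ M n := fun n => le_trans one_le_two (hM n)
  -- independence of the coupled families
  have hind2 : iIndepFun
      (Sum.elim h2 g) μ := by
    have hcomp := hindep.comp
      (Sum.elim (fun n => CoverageAux.phi (M n)) (fun _ : ℕ => (id : ℝ → ℝ)))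
      (fun i => by
        cases i with
        | inl n => exact CoverageAux.measurable_phi _
        | inr n => exact measurable_id)
    have heq : (fun i => (Sum.elim (fun n => CoverageAux.phi (M n))
        (fun _ : ℕ => (id : ℝ → ℝ)) i) ∘ (Sum.elim h g i)) = Sum.elim h2 g := by
      funext i
      cases i <;> rfl
    rwa [heq] at hcomp
  have hind2'' : iIndepFun
      (Sum.elim h'' g2) μ'' := by
    have hcomp := hindep''.comp
      (Sum.elim (fun _ : ℕ => (id : ℝ → ℝ)) (fun n => CoverageAux.phi (M n)))
      (fun i => by
        cases i with
        | inl n => exact measurable_id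
        | inr n => exact CoverageAux.measurable_phi _)
    have heq : (fun i => (Sum.elim (fun _ : ℕ => (id : ℝ → ℝ))
        (fun n => CoverageAux.phi (M n)) i) ∘ (Sum.elim h'' g'' i)) = Sum.elim h'' g2 := by
      funext i
      cases i <;> rfl
    rwa [heq] at hcomp
  -- marginals of the coupled families
  have hh2d : ∀ n, Measure.map (h2 n) μ = gammaMeasure 1 1 := by
    intro n
    have : h2 n = (CoverageAux.phi (M n)) ∘ (h n) := rfl
    rw [this, ← Measure.map_map (CoverageAux.measurable_phi _) (hhm n), hhd n,
      CoverageAux.map_phi (hMn n)]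
  have hg2d : ∀ n, Measure.map (g2 n) μ'' = gammaMeasure 1 1 := by
    intro n
    have : g2 n = (CoverageAux.phi (M n)) ∘ (g'' n) := rfl
    rw [this, ← Measure.map_map (CoverageAux.measurable_phi _) (hg''m n), hg''d n,
      CoverageAux.map_phi (hMn n)]
  constructor
  · -- full SDMA ≤ SISO
    calc μ'' {ω | ∃ n : ℕ, ENNReal.ofReal (β n) < SIR P x α h'' g'' n ω}
        ≤ μ'' {ω | ∃ n : ℕ, ENNReal.ofReal (β n) < SIR P x α h'' g2 n ω} :=
          measure_mono (CoverageAux.event_subset_of_le_g P x α β hP0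
            (fun n ω => CoverageAux.phi_le _ _))
      _ = μ' {ω | ∃ n : ℕ, ENNReal.ofReal (β n) < SIR P x α h' g' n ω} := by
          rw [CoverageAux.measure_event_eq P x α β μ'' hh''m hg2m,
            CoverageAux.measure_event_eq P x α β μ' hh'm hg'm,
            CoverageAux.joint_eq μ'' μ' (Sum.elim h'' g2) (Sum.elim h' g')
              (fun i => by cases i with
                | inl n => exact hh''m n
                | inr n => exact hg2m n)
              (fun i => by cases i with
                | inl n => exact hh'm n
                | inr n => exact hg'm n)
              hind2'' hindep'
              (fun i => by cases i with
                | inl n => rw [Sum.elim_inl, Sum.elim_inl, hh''d n, hh'd n]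
                | inr n => rw [Sum.elim_inr, Sum.elim_inr, hg2d n, hg'd n])]
  · -- SISO ≤ SU-BF
    calc μ' {ω | ∃ n : ℕ, ENNReal.ofReal (β n) < SIR P x α h' g' n ω}
        = μ {ω | ∃ n : ℕ, ENNReal.ofReal (β n) < SIR P x α h2 g n ω} := by
          rw [CoverageAux.measure_event_eq P x α β μ' hh'm hg'm,
            CoverageAux.measure_event_eq P x α β μ hh2m hgm,
            CoverageAux.joint_eq μ' μ (Sum.elim h' g') (Sum.elim h2 g)
              (fun i => by cases i with
                | inl n => exact hh'm n
                | inr n => exact hg'm n)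
              (fun i => by cases i with
                | inl n => exact hh2m n
                | inr n => exact hgm n)
              hindep' hind2
              (fun i => by cases i with
                | inl n => rw [Sum.elim_inl, Sum.elim_inl, hh'd n, hh2d n]
                | inr n => rw [Sum.elim_inr, Sum.elim_inr, hg'd n, hgd n])]
      _ ≤ μ {ω | ∃ n : ℕ, ENNReal.ofReal (β n) < SIR P x α h g n ω} :=
          measure_mono (CoverageAux.event_subset_of_le_h P x α β hP0
            (fun n ω => CoverageAux.phi_le _ _))
end

section
/- Define the random number of covering base stations X(Δ, Ψ) = Σ_{n∈ℕ} 1(SIR_n > β_n), taking values in ℕ ∪ {∞}. Consider two parameter choices (Δ_n, Ψ_n)_{n∈ℕ} and (Δ'_n, Ψ'_n)_{n∈ℕ} using the same locations x_n, powers P_n and SIR targets β_n. If Δ_n ≥ Δ'_n and Ψ_n ≤ Ψ'_n for every n ∈ ℕ, then X(Δ, Ψ) stochastically dominates X(Δ', Ψ'): for every t ∈ ℕ, P(X(Δ, Ψ) > t) ≥ P(X(Δ', Ψ') > t). -/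
open MeasureTheory ProbabilityTheory ENNReal

namespace SDom

open MeasureTheory ProbabilityTheory ENNReal Set Filter Topology


/-- The CDF of the Gamma(k,1) distribution as a primitive of the pdf. -/
noncomputable def F (k : ℕ) (y : ℝ) : ℝ := ∫ x in (0:ℝ)..y, gammaPDFReal k 1 x

variable {k k' : ℕ}

lemma kpos (hk : 0 < k) : (0:ℝ) < (k:ℝ) := by exact_mod_cast hk

lemma integrable_pdf (hk : 0 < k) : Integrable (gammaPDFReal k 1) := by
  refine ⟨(measurable_gammaPDFReal _ _).aestronglyMeasurable, ?_⟩
  rw [hasFiniteIntegral_iff_ofReal (ae_of_all _ (gammaPDFReal_nonneg (kpos hk) one_pos))]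
  have : (fun x => ENNReal.ofReal (gammaPDFReal (k:ℝ) 1 x)) = gammaPDF (k:ℝ) 1 := rfl
  rw [this, lintegral_gammaPDF_eq_one (kpos hk) one_pos]
  exact ENNReal.one_lt_top

lemma intInt (hk : 0 < k) (a b : ℝ) : IntervalIntegrable (gammaPDFReal k 1) volume a b :=
  (integrable_pdf hk).intervalIntegrable

lemma pdf_ae_zero_on (s : Set ℝ) (hs : s ⊆ Iic 0) :
    ∀ᵐ x ∂volume, x ∈ s → gammaPDFReal (k:ℝ) 1 x = 0 := by
  filter_upwards [compl_mem_ae_iff.2 (measure_singleton (0:ℝ))] with x hx hxm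
  have hx0 : x < 0 := lt_of_le_of_ne (hs hxm) hx
  simp [gammaPDFReal, hx0.not_ge]

lemma F_nonpos {y : ℝ} (hy : y ≤ 0) : F k y = 0 := by
  rw [F, intervalIntegral.integral_symm, intervalIntegral.integral_of_le hy,
    setIntegral_congr_ae measurableSet_Ioc
      ((pdf_ae_zero_on (Ioc y 0) Ioc_subset_Iic_self).mono fun x h hx => h hx)]
  simp

lemma measure_Iic (hk : 0 < k) (y : ℝ) :
    gammaMeasure k 1 (Iic y) = ENNReal.ofReal (F k y) := by
  haveI : IsProbabilityMeasure (gammaMeasure (k:ℝ) 1) :=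
    isProbabilityMeasure_gammaMeasure (kpos hk) one_pos
  have h1 : (cdf (gammaMeasure (k:ℝ) 1)) y = ∫ x in Iic y, gammaPDFReal (k:ℝ) 1 x :=
    cdf_gammaMeasure_eq_integral (kpos hk) one_pos y
  have h2 : ∫ x in Iic y, gammaPDFReal (k:ℝ) 1 x = F k y := by
    rcases le_or_gt y 0 with hy | hy
    · rw [F_nonpos hy,
        setIntegral_congr_ae measurableSet_Iic
          ((pdf_ae_zero_on (Iic y) (Iic_subset_Iic.2 hy)).mono fun x h hx => h hx)]
      simp
    · rw [← Iic_union_Ioc_eq_Iic hy.le,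
        setIntegral_union (Iic_disjoint_Ioc le_rfl) measurableSet_Ioc
          (integrable_pdf hk).integrableOn (integrable_pdf hk).integrableOn,
        setIntegral_congr_ae measurableSet_Iic
          ((pdf_ae_zero_on (Iic 0) subset_rfl).mono fun x h hx => h hx),
        F, intervalIntegral.integral_of_le hy.le]
      simp
  have h3 := (cdf_eq_real (μ := gammaMeasure (k:ℝ) 1) y).trans (measureReal_def _ _)
  rw [← ENNReal.ofReal_toReal (measure_ne_top (gammaMeasure (k:ℝ) 1) (Iic y)), ← h3, h1, h2]

lemma F_nonneg (hk : 0 < k) (y : ℝ) : 0 ≤ F k y := by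
  rcases le_or_gt y 0 with hy | hy
  · rw [F_nonpos hy]
  · exact intervalIntegral.integral_nonneg hy.le
      fun x _ => gammaPDFReal_nonneg (kpos hk) one_pos x

lemma F_sub (hk : 0 < k) (a b : ℝ) :
    F k b - F k a = ∫ x in a..b, gammaPDFReal k 1 x := by
  rw [F, F, ← intervalIntegral.integral_add_adjacent_intervals (intInt hk 0 a) (intInt hk a b)]
  ring

lemma F_mono (hk : 0 < k) : Monotone (F k) := by
  intro a b hab
  have h := F_sub hk a b
  have h2 : (0:ℝ) ≤ ∫ x in a..b, gammaPDFReal (k:ℝ) 1 x :=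
    intervalIntegral.integral_nonneg hab fun x _ => gammaPDFReal_nonneg (kpos hk) one_pos x
  linarith

lemma F_strictMonoOn (hk : 0 < k) (a b : ℝ) (ha : 0 ≤ a) (hab : a < b) : F k a < F k b := by
  have key : 0 < ∫ x in a..b, gammaPDFReal (k:ℝ) 1 x :=
    intervalIntegral.intervalIntegral_pos_of_pos_on (intInt hk a b)
      (fun x hx => gammaPDFReal_pos (kpos hk) one_pos (lt_of_le_of_lt ha hx.1)) hab
  have h := F_sub hk a b
  linarith

lemma F_eq_cdf (hk : 0 < k) :
    F k = fun y => cdf (gammaMeasure (k:ℝ) 1) y := by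
  haveI : IsProbabilityMeasure (gammaMeasure (k:ℝ) 1) :=
    isProbabilityMeasure_gammaMeasure (kpos hk) one_pos
  funext y
  rw [cdf_eq_real, measureReal_def, measure_Iic hk, ENNReal.toReal_ofReal (F_nonneg hk y)]

lemma F_tendsto (hk : 0 < k) : Tendsto (F k) atTop (𝓝 1) := by
  haveI : IsProbabilityMeasure (gammaMeasure (k:ℝ) 1) :=
    isProbabilityMeasure_gammaMeasure (kpos hk) one_pos
  rw [F_eq_cdf hk]
  exact tendsto_cdf_atTop _

lemma F_le_one (hk : 0 < k) (y : ℝ) : F k y ≤ 1 := by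
  haveI : IsProbabilityMeasure (gammaMeasure (k:ℝ) 1) :=
    isProbabilityMeasure_gammaMeasure (kpos hk) one_pos
  have hle : gammaMeasure (k:ℝ) 1 (Iic y) ≤ 1 := prob_le_one
  rw [measure_Iic hk] at hle
  exact_mod_cast ENNReal.ofReal_le_one.1 hle

lemma F_lt_one (hk : 0 < k) (y : ℝ) : F k y < 1 := by
  have h1 : F k y ≤ F k (max y 0) := F_mono hk (le_max_left _ _)
  have h2 : F k (max y 0) < F k (max y 0 + 1) :=
    F_strictMonoOn hk _ _ (le_max_right _ _) (by linarith)
  have h3 := F_le_one hk (max y 0 + 1)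
  linarith

lemma F_continuous (hk : 0 < k) : Continuous (F k) :=
  intervalIntegral.continuous_primitive (intInt hk) 0

lemma pdf_eq (hk : 0 < k) {x : ℝ} (hx : 0 ≤ x) :
    gammaPDFReal k 1 x = x ^ (k - 1) * Real.exp (-x) / Nat.factorial (k - 1) := by
  rw [gammaPDFReal, if_pos hx]
  have hc : ((k:ℝ) - 1) = ((k - 1 : ℕ) : ℝ) := by
    rw [Nat.cast_sub hk]; simp
  have hg : Real.Gamma (k:ℝ) = Nat.factorial (k - 1) := by
    rw [show ((k:ℝ)) = ((k - 1 : ℕ) : ℝ) + 1 by rw [Nat.cast_sub hk]; ring,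
      Real.Gamma_nat_eq_factorial]
  rw [hc, Real.rpow_natCast, hg]
  norm_num [Real.one_rpow]
  ring

lemma hasDeriv_psi (hk : 0 < k) (x : ℝ) (hx : 0 ≤ x) :
    HasDerivAt (fun y => y ^ k * Real.exp (-y) / Nat.factorial k)
      (gammaPDFReal k 1 x - gammaPDFReal (k + 1 : ℕ) 1 x) x := by
  have h1 : HasDerivAt (fun y : ℝ => y ^ k) ((k : ℝ) * x ^ (k - 1)) x := by
    exact hasDerivAt_pow k x
  have h2 : HasDerivAt (fun y : ℝ => Real.exp (-y)) (-Real.exp (-x)) x := by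
    simpa using (hasDerivAt_neg x).exp
  have h3 := (h1.mul h2).div_const (Nat.factorial k : ℝ)
  refine h3.congr_deriv ?_
  rw [pdf_eq hk hx, pdf_eq (Nat.succ_pos k) hx]
  have hfac : ((k:ℝ)) * (Nat.factorial (k - 1) : ℝ) = (Nat.factorial k : ℝ) := by
    exact_mod_cast congrArg (Nat.cast (R := ℝ)) (Nat.mul_factorial_pred hk.ne')
  have hne : (Nat.factorial (k - 1) : ℝ) ≠ 0 := by positivity
  have hne2 : (Nat.factorial k : ℝ) ≠ 0 := by positivity
  field_simp [← hfac]
  rw [← hfac]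
  obtain ⟨j, rfl⟩ := Nat.exists_eq_succ_of_ne_zero hk.ne'
  simp only [Nat.succ_sub_one, Nat.add_sub_cancel, pow_succ, Nat.factorial_succ]
  push_cast
  ring

lemma F_succ_sub (hk : 0 < k) {y : ℝ} (hy : 0 ≤ y) :
    F k y - F (k + 1) y = y ^ k * Real.exp (-y) / Nat.factorial k := by
  have key : ∫ x in (0:ℝ)..y, (gammaPDFReal k 1 x - gammaPDFReal (k + 1 : ℕ) 1 x)
      = y ^ k * Real.exp (-y) / Nat.factorial k - (0:ℝ) ^ k * Real.exp (-0) / Nat.factorial k := by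
    apply intervalIntegral.integral_eq_sub_of_hasDerivAt
    · intro x hx
      rw [Set.uIcc_of_le hy] at hx
      exact hasDeriv_psi hk x hx.1
    · exact (intInt hk 0 y).sub (intInt (Nat.succ_pos k) 0 y)
  rw [F, F, ← intervalIntegral.integral_sub (intInt hk 0 y) (intInt (Nat.succ_pos k) 0 y), key,
    zero_pow hk.ne', zero_mul, zero_div, sub_zero]

lemma F_anti (hk' : 0 < k') (hkk : k' ≤ k) (y : ℝ) : F k y ≤ F k' y := by
  induction k, hkk using Nat.le_induction with
  | base => exact le_rfl
  | succ n hn ih =>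
    have hn0 : 0 < n := lt_of_lt_of_le hk' hn
    rcases le_or_gt y 0 with hy | hy
    · rw [F_nonpos hy, F_nonpos hy]
    · have h := F_succ_sub hn0 hy.le
      have h2 : 0 ≤ y ^ n * Real.exp (-y) / Nat.factorial n := by positivity
      linarith


noncomputable def Q (k : ℕ) (p : ℝ) : ℝ := sInf {y | 0 ≤ y ∧ p ≤ F k y}

lemma Qset_bddBelow (k : ℕ) (p : ℝ) : BddBelow {y | 0 ≤ y ∧ p ≤ F k y} :=
  ⟨0, fun _ hy => hy.1⟩

lemma Qset_nonempty (hk : 0 < k) {p : ℝ} (hp : p < 1) :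
    {y | 0 ≤ y ∧ p ≤ F k y}.Nonempty := by
  have h : ∀ᶠ y in atTop, p < F k y := (F_tendsto hk).eventually (eventually_gt_nhds hp)
  obtain ⟨y, hy⟩ := h.exists
  exact ⟨max y 0, le_max_right _ _, le_trans hy.le (F_mono hk (le_max_left _ _))⟩

lemma Q_mem (hk : 0 < k) {p : ℝ} (hp : p < 1) : Q k p ∈ {y | 0 ≤ y ∧ p ≤ F k y} := by
  refine IsClosed.csInf_mem ?_ (Qset_nonempty hk hp) (Qset_bddBelow k p)
  have hs : {y | 0 ≤ y ∧ p ≤ F k y} = Ici 0 ∩ F k ⁻¹' Ici p := by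
    ext y; simp [Set.mem_inter_iff, Set.mem_preimage]
  rw [hs]
  exact isClosed_Ici.inter (isClosed_Ici.preimage (F_continuous hk))

lemma Q_le_iff (hk : 0 < k) {p : ℝ} (hp : p < 1) {y : ℝ} (hy : 0 ≤ y) :
    Q k p ≤ y ↔ p ≤ F k y :=
  ⟨fun h => le_trans (Q_mem hk hp).2 (F_mono hk h),
   fun h => csInf_le (Qset_bddBelow k p) ⟨hy, h⟩⟩

/-- The monotone map transporting `Gamma(k',1)` to `Gamma(k,1)`. -/
noncomputable def T (k' k : ℕ) (x : ℝ) : ℝ := Q k (F k' x)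

lemma T_nonneg (hk' : 0 < k') (hk : 0 < k) (x : ℝ) : 0 ≤ T k' k x :=
  (Q_mem hk (F_lt_one hk' x)).1

lemma T_mono (hk' : 0 < k') (hk : 0 < k) : Monotone (T k' k) := fun a b hab =>
  csInf_le_csInf (Qset_bddBelow k _) (Qset_nonempty hk (F_lt_one hk' b))
    (fun y hy => ⟨hy.1, le_trans (F_mono hk' hab) hy.2⟩)

lemma T_measurable (hk' : 0 < k') (hk : 0 < k) : Measurable (T k' k) :=
  (T_mono hk' hk).measurable

lemma map_T (hk' : 0 < k') (hk : 0 < k) :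
    (gammaMeasure k' 1).map (T k' k) = gammaMeasure k 1 := by
  haveI h1 : IsProbabilityMeasure (gammaMeasure (k':ℝ) 1) :=
    isProbabilityMeasure_gammaMeasure (kpos hk') one_pos
  haveI h2 : IsProbabilityMeasure (gammaMeasure (k:ℝ) 1) :=
    isProbabilityMeasure_gammaMeasure (kpos hk) one_pos
  haveI h3 : IsProbabilityMeasure ((gammaMeasure (k':ℝ) 1).map (T k' k)) :=
    Measure.isProbabilityMeasure_map (T_measurable hk' hk).aemeasurable
  refine Measure.ext_of_Iic _ _ fun z => ?_
  rw [Measure.map_apply (T_measurable hk' hk) measurableSet_Iic]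
  rcases lt_or_ge z 0 with hz | hz
  · have he : T k' k ⁻¹' Iic z = ∅ := by
      apply eq_empty_of_forall_notMem
      intro t ht
      exact absurd (le_trans (T_nonneg hk' hk t) ht) hz.not_ge
    rw [he, measure_Iic hk z, F_nonpos hz.le]
    simp
  · have hq1 : F k z < 1 := F_lt_one hk z
    obtain ⟨b, hb0, hbq⟩ := Qset_nonempty hk' hq1
    have hmem : F k z ∈ Icc (F k' 0) (F k' b) :=
      ⟨by rw [F_nonpos le_rfl]; exact F_nonneg hk z, hbq⟩
    obtain ⟨c, hc, hfc⟩ := intermediate_value_Icc hb0 (F_continuous hk').continuousOn hmem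
    have hset : T k' k ⁻¹' Iic z = Iic c := by
      ext t
      simp only [mem_preimage, mem_Iic]
      constructor
      · intro h
        have hle : F k' t ≤ F k z := (Q_le_iff hk (F_lt_one hk' t) hz).1 h
        by_contra hlt
        push_neg at hlt
        rw [← hfc] at hle
        exact absurd hle (not_le.2 (F_strictMonoOn hk' c t hc.1 hlt))
      · intro h
        refine (Q_le_iff hk (F_lt_one hk' t) hz).2 ?_
        rw [← hfc]
        exact F_mono hk' h
    rw [hset, measure_Iic hk' c, hfc, measure_Iic hk z]

lemma le_T (hk' : 0 < k') (hkk : k' ≤ k) {x : ℝ} (hx : 0 < x) : x ≤ T k' k x := by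
  have hk : 0 < k := lt_of_lt_of_le hk' hkk
  by_contra hlt
  push_neg at hlt
  have h0 : 0 ≤ T k' k x := T_nonneg hk' hk x
  have h1 : F k' x ≤ F k (T k' k x) := (Q_le_iff hk (F_lt_one hk' x) h0).1 le_rfl
  have h2 : F k (T k' k x) ≤ F k' (T k' k x) := F_anti hk' hkk _
  have h3 : F k' (T k' k x) < F k' x := F_strictMonoOn hk' _ _ h0 hlt
  linarith

lemma T_le (hk : 0 < k) (hkk : k ≤ k') {x : ℝ} (hx : 0 < x) : T k' k x ≤ x := by
  have hk' : 0 < k' := lt_of_lt_of_le hk hkk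
  exact (Q_le_iff hk (F_lt_one hk' x) hx.le).2 (F_anti hk hkk x)

lemma gamma_Iic_zero (hk : 0 < k) : gammaMeasure (k:ℝ) 1 (Iic 0) = 0 := by
  rw [measure_Iic hk, F_nonpos le_rfl]; simp




open MeasureTheory ProbabilityTheory Set

variable {ι : Type*}

lemma map_restrict_pi {Ω : Type*} [MeasurableSpace Ω] (μ : Measure Ω) [IsProbabilityMeasure μ]
    (f : ι → Ω → ℝ) (hf : ∀ i, Measurable (f i))
    (hi : iIndepFun f μ)
    (I : Finset ι) :
    Measure.map (fun ω (i : I) => f i ω) μ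
      = Measure.pi (fun i : I => Measure.map (f i.1) μ) := by
  haveI : ∀ i : I, IsProbabilityMeasure (Measure.map (f i.1) μ) := fun i =>
    Measure.isProbabilityMeasure_map (hf i.1).aemeasurable
  refine (Measure.pi_eq fun s hs => ?_).symm
  rw [Measure.map_apply (measurable_pi_lambda _ fun i => hf i.1) (MeasurableSet.univ_pi hs)]
  classical
  set sets : ι → Set ℝ := fun j => if h : j ∈ I then s ⟨j, h⟩ else univ with hsets
  have hpre : (fun ω (i : I) => f i ω) ⁻¹' (univ.pi s) = ⋂ j ∈ I, f j ⁻¹' sets j := by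
    ext ω
    simp only [mem_preimage, Set.mem_univ_pi, mem_iInter]
    constructor
    · intro h j hj
      simpa only [hsets, dif_pos hj, mem_preimage] using h ⟨j, hj⟩
    · intro h i
      have := h i.1 i.2
      simpa only [hsets, dif_pos i.2, mem_preimage] using this
  rw [hpre, hi.measure_inter_preimage_eq_mul I (fun j hj => by
      simp only [hsets, dif_pos hj]; exact hs ⟨j, hj⟩)]
  rw [← Finset.prod_coe_sort I (fun j => μ (f j ⁻¹' sets j))]
  refine Finset.prod_congr rfl fun i _ => ?_
  rw [Measure.map_apply (hf i.1) (hs i)]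
  congr 1
  simp only [hsets, dif_pos i.2]

lemma map_joint_eq {Ω Ω' : Type*} [MeasurableSpace Ω] [MeasurableSpace Ω']
    (μ : Measure Ω) [IsProbabilityMeasure μ] (μ' : Measure Ω') [IsProbabilityMeasure μ']
    (f : ι → Ω → ℝ) (f' : ι → Ω' → ℝ)
    (hf : ∀ i, Measurable (f i)) (hf' : ∀ i, Measurable (f' i))
    (hi : iIndepFun f μ)
    (hi' : iIndepFun f' μ')
    (hmarg : ∀ i, Measure.map (f i) μ = Measure.map (f' i) μ') :
    Measure.map (fun ω i => f i ω) μ = Measure.map (fun ω i => f' i ω) μ' := by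
  have hJ : Measurable (fun ω i => f i ω) := measurable_pi_lambda _ hf
  have hJ' : Measurable (fun ω i => f' i ω) := measurable_pi_lambda _ hf'
  haveI : IsProbabilityMeasure (Measure.map (fun ω i => f i ω) μ) :=
    Measure.isProbabilityMeasure_map hJ.aemeasurable
  haveI : IsProbabilityMeasure (Measure.map (fun ω i => f' i ω) μ') :=
    Measure.isProbabilityMeasure_map hJ'.aemeasurable
  refine ext_of_generate_finite (measurableCylinders fun _ : ι => ℝ)
    generateFrom_measurableCylinders.symm isPiSystem_measurableCylinders
    (fun s hs => ?_) (by simp)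
  have hsm : MeasurableSet s := MeasurableSet.of_mem_measurableCylinders hs
  obtain ⟨I, u, hu, rfl⟩ := (mem_measurableCylinders s).mp hs
  rw [Measure.map_apply hJ hsm, Measure.map_apply hJ' hsm]
  have h1 : (fun ω i => f i ω) ⁻¹' cylinder I u = (fun ω (i : I) => f i ω) ⁻¹' u := rfl
  have h2 : (fun ω i => f' i ω) ⁻¹' cylinder I u = (fun ω (i : I) => f' i ω) ⁻¹' u := rfl
  rw [h1, h2, ← Measure.map_apply (measurable_pi_lambda _ fun i => hf i.1) hu,
    ← Measure.map_apply (measurable_pi_lambda _ fun i => hf' i.1) hu,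
    map_restrict_pi μ f hf hi I, map_restrict_pi μ' f' hf' hi' I]
  congr 1
  exact congrArg Measure.pi (funext fun (i : I) => hmarg i.1)



end SDom


/-- The number of base stations whose SIR exceeds its target, valued in `[0,∞]`
(`ℕ ∪ {∞}` embedded in `ℝ≥0∞`). -/
noncomputable def numCovering {Ω : Type*} (P : ℕ → ℝ) (x : ℕ → EuclideanSpace ℝ (Fin 2))
    (α : ℝ) (β : ℕ → ℝ) (h g : ℕ → Ω → ℝ) (ω : Ω) : ℝ≥0∞ :=
  ∑' n : ℕ, Set.indicator {ω' | ENNReal.ofReal (β n) < SIR P x α h g n ω'}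
    (fun _ => (1 : ℝ≥0∞)) ω


namespace SDom

open MeasureTheory ProbabilityTheory ENNReal Set Sum

variable (P : ℕ → ℝ) (x : ℕ → EuclideanSpace ℝ (Fin 2)) (α : ℝ) (β : ℕ → ℝ)

lemma SIR_mono {Ω : Type*} (hP : ∀ n, 0 < P n) {h1 g1 h2 g2 : ℕ → Ω → ℝ} {ω : Ω}
    (hh : ∀ n, h1 n ω ≤ h2 n ω) (hg : ∀ n, g2 n ω ≤ g1 n ω) (n : ℕ) :
    SIR P x α h1 g1 n ω ≤ SIR P x α h2 g2 n ω := by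
  have hc : ∀ m : ℕ, (0:ℝ) ≤ ‖x m‖ ^ (-α) := fun m => Real.rpow_nonneg (norm_nonneg _) _
  unfold SIR
  refine ENNReal.div_le_div (ENNReal.ofReal_le_ofReal ?_) ?_
  · exact mul_le_mul_of_nonneg_right
      (mul_le_mul_of_nonneg_left (hh n) (hP n).le) (hc n)
  · unfold interference
    refine ENNReal.tsum_le_tsum fun m => ?_
    split_ifs with hmn
    · exact le_rfl
    · exact ENNReal.ofReal_le_ofReal
        (mul_le_mul_of_nonneg_right (mul_le_mul_of_nonneg_left (hg m) (hP m).le) (hc m))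

lemma numCovering_mono {Ω : Type*} (hP : ∀ n, 0 < P n) {h1 g1 h2 g2 : ℕ → Ω → ℝ} {ω : Ω}
    (hh : ∀ n, h1 n ω ≤ h2 n ω) (hg : ∀ n, g2 n ω ≤ g1 n ω) :
    numCovering P x α β h1 g1 ω ≤ numCovering P x α β h2 g2 ω := by
  unfold numCovering
  refine ENNReal.tsum_le_tsum fun n => ?_
  by_cases hmem : ω ∈ {ω' | ENNReal.ofReal (β n) < SIR P x α h1 g1 n ω'}
  · have hmem2 : ω ∈ {ω' | ENNReal.ofReal (β n) < SIR P x α h2 g2 n ω'} :=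
      lt_of_lt_of_le hmem (SIR_mono P x α hP hh hg n)
    rw [Set.indicator_of_mem hmem, Set.indicator_of_mem hmem2]
  · rw [Set.indicator_of_notMem hmem]
    exact zero_le

lemma measurable_event (t : ℕ) :
    MeasurableSet {f : (ℕ ⊕ ℕ) → ℝ | (t : ℝ≥0∞) < numCovering P x α β
      (fun n f => f (inl n)) (fun n f => f (inr n)) f} := by
  have hSIR : ∀ n, Measurable fun f : (ℕ ⊕ ℕ) → ℝ =>
      SIR P x α (fun n f => f (inl n)) (fun n f => f (inr n)) n f := by
    intro n
    refine Measurable.div ?_ ?_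
    · exact ENNReal.measurable_ofReal.comp
        (by fun_prop)
    · refine Measurable.ennreal_tsum fun m => ?_
      by_cases hmn : m = n
      · simp only [hmn, if_pos rfl]
        exact measurable_const
      · simp only [if_neg hmn]
        exact ENNReal.measurable_ofReal.comp
          (by fun_prop)
  have hnum : Measurable fun f : (ℕ ⊕ ℕ) → ℝ => numCovering P x α β
      (fun n f => f (inl n)) (fun n f => f (inr n)) f := by
    unfold numCovering
    refine Measurable.ennreal_tsum fun n => ?_
    exact Measurable.indicator measurable_const
      (measurableSet_lt measurable_const (hSIR n))
  exact measurableSet_lt measurable_const hnum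

end SDom

/-- Ordering of the number of covering base stations: larger direct-link shapes `Δ` and
smaller interfering shapes `Ψ` give a stochastically larger number of covering base stations. -/
theorem numCovering_stochastic_dominance
    (α : ℝ) (hα : 2 < α)
    (x : ℕ → EuclideanSpace ℝ (Fin 2)) (hx : ∀ n, x n ≠ 0)
    (P : ℕ → ℝ) (hP : ∀ n, 0 < P n)
    (β : ℕ → ℝ) (hβ : ∀ n, 0 < β n)
    (Δ Ψ Δ' Ψ' : ℕ → ℕ)
    (hΔpos : ∀ n, 0 < Δ n) (hΨpos : ∀ n, 0 < Ψ n)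
    (hΔ'pos : ∀ n, 0 < Δ' n) (hΨ'pos : ∀ n, 0 < Ψ' n)
    (hΔ : ∀ n, Δ' n ≤ Δ n) (hΨ : ∀ n, Ψ n ≤ Ψ' n)
    {Ω : Type*} [MeasurableSpace Ω] (μ : Measure Ω) [IsProbabilityMeasure μ]
    {Ω' : Type*} [MeasurableSpace Ω'] (μ' : Measure Ω') [IsProbabilityMeasure μ']
    (h g : ℕ → Ω → ℝ) (h' g' : ℕ → Ω' → ℝ)
    (hhm : ∀ n, Measurable (h n)) (hgm : ∀ n, Measurable (g n))
    (hh'm : ∀ n, Measurable (h' n)) (hg'm : ∀ n, Measurable (g' n))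
    (hindep : iIndepFun
      (Sum.elim h g) μ)
    (hindep' : iIndepFun
      (Sum.elim h' g') μ')
    (hhd : ∀ n, Measure.map (h n) μ = gammaMeasure (Δ n) 1)
    (hgd : ∀ n, Measure.map (g n) μ = gammaMeasure (Ψ n) 1)
    (hh'd : ∀ n, Measure.map (h' n) μ' = gammaMeasure (Δ' n) 1)
    (hg'd : ∀ n, Measure.map (g' n) μ' = gammaMeasure (Ψ' n) 1) :
    ∀ t : ℕ, μ' {ω | (t : ℝ≥0∞) < numCovering P x α β h' g' ω} ≤
      μ {ω | (t : ℝ≥0∞) < numCovering P x α β h g ω} := by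
  intro t
  classical
  set h2 : ℕ → Ω' → ℝ := fun n ω => SDom.T (Δ' n) (Δ n) (h' n ω) with hh2def
  set g2 : ℕ → Ω' → ℝ := fun n ω => SDom.T (Ψ' n) (Ψ n) (g' n ω) with hg2def
  have hThm : ∀ n, Measurable (SDom.T (Δ' n) (Δ n)) := fun n =>
    SDom.T_measurable (hΔ'pos n) (hΔpos n)
  have hTgm : ∀ n, Measurable (SDom.T (Ψ' n) (Ψ n)) := fun n =>
    SDom.T_measurable (hΨ'pos n) (hΨpos n)
  have hh2m : ∀ n, Measurable (h2 n) := fun n => (hThm n).comp (hh'm n)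
  have hg2m : ∀ n, Measurable (g2 n) := fun n => (hTgm n).comp (hg'm n)
  -- a.e. positivity of the primed variables
  have hposh : ∀ n, ∀ᵐ ω ∂μ', 0 < h' n ω := by
    intro n
    rw [MeasureTheory.ae_iff]
    have hset : {ω | ¬ 0 < h' n ω} = h' n ⁻¹' Set.Iic 0 := by
      ext ω; simp [not_lt]
    rw [hset, ← Measure.map_apply (hh'm n) measurableSet_Iic, hh'd n,
      SDom.gamma_Iic_zero (hΔ'pos n)]
  have hposg : ∀ n, ∀ᵐ ω ∂μ', 0 < g' n ω := by
    intro n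
    rw [MeasureTheory.ae_iff]
    have hset : {ω | ¬ 0 < g' n ω} = g' n ⁻¹' Set.Iic 0 := by
      ext ω; simp [not_lt]
    rw [hset, ← Measure.map_apply (hg'm n) measurableSet_Iic, hg'd n,
      SDom.gamma_Iic_zero (hΨ'pos n)]
  have hpos : ∀ᵐ ω ∂μ', (∀ n, 0 < h' n ω) ∧ (∀ n, 0 < g' n ω) := by
    rw [Filter.eventually_and]
    exact ⟨MeasureTheory.ae_all_iff.2 hposh, MeasureTheory.ae_all_iff.2 hposg⟩
  -- Step A : pointwise (a.e.) domination via the coupling maps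
  have stepA : μ' {ω | (t : ℝ≥0∞) < numCovering P x α β h' g' ω}
      ≤ μ' {ω | (t : ℝ≥0∞) < numCovering P x α β h2 g2 ω} := by
    refine measure_mono_ae ?_
    filter_upwards [hpos] with ω hω hmem
    exact lt_of_lt_of_le hmem (SDom.numCovering_mono P x α β hP
      (fun n => SDom.le_T (hΔ'pos n) (hΔ n) (hω.1 n))
      (fun n => SDom.T_le (hΨpos n) (hΨ n) (hω.2 n)))
  -- Step B : the transformed family has the same law as (h, g)
  have hf2 : ∀ i : ℕ ⊕ ℕ, Measurable (Sum.elim h2 g2 i) := by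
    intro i; cases i with
    | inl n => exact hh2m n
    | inr n => exact hg2m n
  have hf1 : ∀ i : ℕ ⊕ ℕ, Measurable (Sum.elim h g i) := by
    intro i; cases i with
    | inl n => exact hhm n
    | inr n => exact hgm n
  have hindep2 : iIndepFun
      (Sum.elim h2 g2) μ' := by
    have hcomp := hindep'.comp
      (Sum.elim (fun n => SDom.T (Δ' n) (Δ n)) (fun n => SDom.T (Ψ' n) (Ψ n)))
      (fun i => by cases i with
        | inl n => exact hThm n
        | inr n => exact hTgm n)
    have heq : (fun i => Sum.elim (fun n => SDom.T (Δ' n) (Δ n))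
            (fun n => SDom.T (Ψ' n) (Ψ n)) i ∘ Sum.elim h' g' i)
        = Sum.elim h2 g2 := by
      funext i; cases i <;> rfl
    rwa [heq] at hcomp
  have hmarg : ∀ i : ℕ ⊕ ℕ,
      Measure.map (Sum.elim h2 g2 i) μ' = Measure.map (Sum.elim h g i) μ := by
    intro i
    cases i with
    | inl n =>
      show Measure.map (h2 n) μ' = Measure.map (h n) μ
      have hcmp : h2 n = SDom.T (Δ' n) (Δ n) ∘ h' n := rfl
      rw [hcmp, ← Measure.map_map (hThm n) (hh'm n), hh'd n,
        SDom.map_T (hΔ'pos n) (hΔpos n), hhd n]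
    | inr n =>
      show Measure.map (g2 n) μ' = Measure.map (g n) μ
      have hcmp : g2 n = SDom.T (Ψ' n) (Ψ n) ∘ g' n := rfl
      rw [hcmp, ← Measure.map_map (hTgm n) (hg'm n), hg'd n,
        SDom.map_T (hΨ'pos n) (hΨpos n), hgd n]
  have hJ2 : Measurable (fun ω (i : ℕ ⊕ ℕ) => Sum.elim h2 g2 i ω) :=
    measurable_pi_lambda _ hf2
  have hJ1 : Measurable (fun ω (i : ℕ ⊕ ℕ) => Sum.elim h g i ω) :=
    measurable_pi_lambda _ hf1
  have hlaw : Measure.map (fun ω i => Sum.elim h2 g2 i ω) μ'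
      = Measure.map (fun ω i => Sum.elim h g i ω) μ :=
    SDom.map_joint_eq μ' μ (Sum.elim h2 g2) (Sum.elim h g) hf2 hf1 hindep2 hindep hmarg
  have hEm := SDom.measurable_event P x α β t
  have stepB : μ' {ω | (t : ℝ≥0∞) < numCovering P x α β h2 g2 ω}
      = μ {ω | (t : ℝ≥0∞) < numCovering P x α β h g ω} := by
    have e2 : {ω | (t : ℝ≥0∞) < numCovering P x α β h2 g2 ω}
        = (fun ω (i : ℕ ⊕ ℕ) => Sum.elim h2 g2 i ω) ⁻¹'
          {f : (ℕ ⊕ ℕ) → ℝ | (t : ℝ≥0∞) < numCovering P x α β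
            (fun n f => f (Sum.inl n)) (fun n f => f (Sum.inr n)) f} := rfl
    have e1 : {ω | (t : ℝ≥0∞) < numCovering P x α β h g ω}
        = (fun ω (i : ℕ ⊕ ℕ) => Sum.elim h g i ω) ⁻¹'
          {f : (ℕ ⊕ ℕ) → ℝ | (t : ℝ≥0∞) < numCovering P x α β
            (fun n f => f (Sum.inl n)) (fun n f => f (Sum.inr n)) f} := rfl
    rw [e2, e1, ← Measure.map_apply hJ2 hEm, ← Measure.map_apply hJ1 hEm, hlaw]
  exact le_trans stepA (le_of_eq stepB)
end
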